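/- arXiv:1212.5686 — 3 statements merged into one kernel-verified Lean document; each statement's English description precedes it below -/
import Mathlib

section
/- Let ρ be a zero proximate order that is twice differentiable on (0,∞)\{1} and satisfies ρ(1/r) = −ρ(r). Suppose V(r) → ∞ as r → ∞ and the function h(x) = log V(e^x) is concave on some neighborhood of +∞. Set γ(t) = sup_{r>0} V(rt)/V(r). Then there exists a constant M such that γ(t) ≤ M·V(t) for all t ≥ 1; moreover, if h is concave on all of (0,∞), then γ(t) = V(t) for all t ≥ 1. -/
open MeasureTheory Filter Topology Set
open scoped ENNReal

noncomputable section

/-- `V ρ r = r ^ ρ(r)`. -/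
def V (ρ : ℝ → ℝ) (r : ℝ) : ℝ := r ^ ρ r

/-- A proximate order (in the sense of Valiron) with limit `l` at infinity:
`ρ` is locally absolutely continuous on `(0,∞)`, `ρ(r) → l`, and
`r · log r · ρ'(r) → 0` as `r → ∞`. -/
structure IsProximateOrder (ρ : ℝ → ℝ) (l : ℝ) : Prop where
  locAC : ∀ a : ℝ, 0 < a → ∀ b : ℝ, a ≤ b →
    MeasureTheory.IntegrableOn (deriv ρ) (Set.Icc a b) ∧
      ∀ x ∈ Set.Icc a b, ρ x = ρ a + ∫ t in a..x, deriv ρ t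
  tendsto_lim : Filter.Tendsto ρ Filter.atTop (nhds l)
  tendsto_deriv : Filter.Tendsto (fun r => r * Real.log r * deriv ρ r) Filter.atTop (nhds 0)

/-- A zero proximate order: a proximate order with limit `0`, satisfying
`ρ(1/r) = -ρ(r)`, continuously differentiable on `(0,∞) \ {1}`, and such that
`V(r) = r ^ ρ(r)` extends continuously to `r = 1` with value `V(1) = 1`. -/
structure IsZeroProximateOrder (ρ : ℝ → ℝ) : Prop where
  proximate : IsProximateOrder ρ 0
  symm : ∀ r : ℝ, 0 < r → ρ r⁻¹ = -ρ r
  diffAway : ∀ x ∈ Set.Ioi (0:ℝ) \ {1}, DifferentiableAt ℝ ρ x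
  derivCont : ContinuousOn (deriv ρ) (Set.Ioi (0:ℝ) \ {1})
  V_one : Filter.Tendsto (V ρ) (nhdsWithin 1 (Set.Ioi (0:ℝ) \ {1})) (nhds 1)

/-- `γ(t) = sup_{r>0} V(rt)/V(r)` (zero proximate order case). -/
noncomputable def gamma0 (ρ : ℝ → ℝ) (t : ℝ) : ℝ :=
  sSup {y : ℝ | ∃ r : ℝ, 0 < r ∧ y = V ρ (r * t) / V ρ r}

lemma aux_four {S : Set ℝ} {f : ℝ → ℝ} (hf : ConcaveOn ℝ S f) {a b t : ℝ}
    (ha : a ∈ S) (hbt : b + t ∈ S) (hab : a ≤ b) (ht : 0 ≤ t) :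
    f a + f (b + t) ≤ f (a + t) + f b := by
  rcases ht.eq_or_lt with rfl | ht
  · simp [add_comm]
  rcases hab.eq_or_lt with rfl | hab
  · linarith [le_refl (f a + f (a + t))]
  have hdpos : 0 < b + t - a := by linarith
  have hdne : b + t - a ≠ 0 := ne_of_gt hdpos
  have hl0 : 0 ≤ (b - a) / (b + t - a) := by
    apply div_nonneg <;> linarith
  have hl1 : (b - a) / (b + t - a) ≤ 1 := by
    rw [div_le_one hdpos]; linarith
  have h1 := hf.2 ha hbt hl0 (by linarith : (0:ℝ) ≤ 1 - (b-a)/(b+t-a)) (by ring)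
  have h2 := hf.2 ha hbt (by linarith : (0:ℝ) ≤ 1 - (b-a)/(b+t-a)) hl0 (by ring)
  have e1 : ((b - a) / (b + t - a)) • a + (1 - (b - a) / (b + t - a)) • (b + t) = a + t := by
    simp only [smul_eq_mul]; field_simp; ring
  have e2 : (1 - (b - a) / (b + t - a)) • a + ((b - a) / (b + t - a)) • (b + t) = b := by
    simp only [smul_eq_mul]; field_simp; ring
  rw [e1] at h1; rw [e2] at h2
  simp only [smul_eq_mul] at h1 h2
  ring_nf at h1 h2 ⊢
  linarith [h1, h2]

lemma aux_mono {S : Set ℝ} {f : ℝ → ℝ} (hf : ConcaveOn ℝ S f)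
    (hT : Tendsto f atTop atTop) {a b : ℝ} (ha : a ∈ S) (hab : a ≤ b)
    (hS : Ici b ⊆ S) : f a ≤ f b := by
  rcases hab.eq_or_lt with rfl | hab
  · exact le_refl _
  obtain ⟨x, hx1, hx2⟩ := ((hT.eventually_ge_atTop (f a)).and (eventually_ge_atTop b)).exists
  have hxa : a < x := lt_of_lt_of_le hab hx2
  have hne : x - a ≠ 0 := by intro hc; linarith [sub_eq_zero.mp hc]
  have hl0 : 0 ≤ (x - b) / (x - a) := by
    apply div_nonneg <;> linarith
  have hm0 : 0 ≤ (b - a) / (x - a) := by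
    apply div_nonneg <;> linarith
  have hsum : (x - b) / (x - a) + (b - a) / (x - a) = 1 := by
    field_simp
    ring
  have h1 := hf.2 ha (hS hx2) hl0 hm0 hsum
  have e1 : ((x - b) / (x - a)) • a + ((b - a) / (x - a)) • x = b := by
    simp only [smul_eq_mul]; field_simp; ring
  rw [e1] at h1
  simp only [smul_eq_mul] at h1
  have h3 : (x - b)/(x - a) * f a + (b - a)/(x - a) * f a = f a := by
    rw [← add_mul, hsum, one_mul]
  have h4 : 0 ≤ (b - a)/(x - a) * (f x - f a) := mul_nonneg hm0 (by linarith)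
  nlinarith [h1, h3, h4]

/-- Theorem 2.6: let `ρ` be a zero proximate order, twice
differentiable on `(0,∞) \ {1}` (with `ρ(1/r) = -ρ(r)`), let `V(r) → ∞` as
`r → ∞`, and let `h(x) = log V(eˣ)` be concave on a neighborhood of `+∞`.
Then `γ(t) ≤ M·V(t)` for `t ≥ 1` and some constant `M`; and if `h` is concave
on all of `(0,∞)`, then `γ(t) = V(t)` for `t ≥ 1`. -/
theorem statement3 (ρ : ℝ → ℝ) (h : IsZeroProximateOrder ρ)
    (htwice : ∀ x ∈ Set.Ioi (0:ℝ) \ {1}, DifferentiableAt ℝ (deriv ρ) x)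
    (hV : Filter.Tendsto (V ρ) Filter.atTop Filter.atTop)
    (hconc : ∃ A : ℝ, ConcaveOn ℝ (Set.Ici A) (fun x => Real.log (V ρ (Real.exp x)))) :
    (∃ M : ℝ, ∀ t : ℝ, 1 ≤ t → gamma0 ρ t ≤ M * V ρ t) ∧
    (ConcaveOn ℝ (Set.Ioi (0:ℝ)) (fun x => Real.log (V ρ (Real.exp x))) →
      ∀ t : ℝ, 1 ≤ t → gamma0 ρ t = V ρ t) := by
  classical
  set g : ℝ → ℝ := fun x => Real.log (V ρ (Real.exp x)) with hg
  -- basic facts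
  have hVpos : ∀ r : ℝ, 0 < r → 0 < V ρ r := fun r hr => Real.rpow_pos_of_pos hr _
  have hV1 : V ρ 1 = 1 := by simp [V]
  have hg0 : g 0 = 0 := by simp [hg, Real.exp_zero, hV1]
  have hVexp : ∀ u : ℝ, 0 < u → Real.exp (g (Real.log u)) = V ρ u := by
    intro u hu
    rw [hg]
    simp only [Real.exp_log hu]
    exact Real.exp_log (hVpos u hu)
  have heven : ∀ x : ℝ, g (-x) = g x := by
    intro x
    have hx : (0:ℝ) < Real.exp x := Real.exp_pos x
    have : V ρ (Real.exp x)⁻¹ = V ρ (Real.exp x) := by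
      simp only [V]
      rw [h.symm _ hx, Real.rpow_neg (inv_nonneg.mpr hx.le), Real.inv_rpow hx.le, inv_inv]
    simp only [hg, Real.exp_neg, this]
  have htop : Tendsto g atTop atTop :=
    Real.tendsto_log_atTop.comp (hV.comp Real.tendsto_exp_atTop)
  -- continuity of g at positive points
  have hcont : ∀ x : ℝ, 0 < x → ContinuousAt g x := by
    intro x hx
    have hmem : Real.exp x ∈ Set.Ioi (0:ℝ) \ {1} := by
      refine ⟨Real.exp_pos x, ?_⟩
      simp only [mem_singleton_iff]
      intro hc
      have := Real.exp_lt_exp.mpr hx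
      rw [Real.exp_zero] at this
      rw [hc] at this; exact lt_irrefl _ this
    have hρc : ContinuousAt ρ (Real.exp x) := (h.diffAway _ hmem).continuousAt
    have hVec : ContinuousAt (fun y : ℝ => Real.exp y ^ ρ (Real.exp y)) x :=
      ContinuousAt.rpow Real.continuous_exp.continuousAt
        (hρc.comp Real.continuous_exp.continuousAt) (Or.inl (Real.exp_pos x).ne')
    have hlogc : ContinuousAt (fun y : ℝ => Real.log (Real.exp y ^ ρ (Real.exp y))) x :=
      hVec.log (by
        have := hVpos _ (Real.exp_pos x)
        simp only [V] at this
        exact this.ne')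
    simpa only [hg, V] using hlogc
  -- limit of g at 0 from the right
  have hzero : Tendsto g (nhdsWithin (0:ℝ) (Set.Ioi 0)) (nhds 0) := by
    have t1 : Tendsto Real.exp (nhdsWithin (0:ℝ) (Set.Ioi 0))
        (nhdsWithin (1:ℝ) (Set.Ioi (0:ℝ) \ {1})) := by
      rw [tendsto_nhdsWithin_iff]
      constructor
      · have := (Real.continuous_exp.tendsto 0).mono_left
          (nhdsWithin_le_nhds (s := Set.Ioi (0:ℝ)))
        rwa [Real.exp_zero] at this
      · filter_upwards [self_mem_nhdsWithin] with x hx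
        refine ⟨Real.exp_pos x, ?_⟩
        simp only [mem_singleton_iff]
        intro hc
        have := Real.exp_lt_exp.mpr (mem_Ioi.mp hx)
        rw [Real.exp_zero, hc] at this; exact lt_irrefl _ this
    have t2 : Tendsto (fun x => V ρ (Real.exp x)) (nhdsWithin (0:ℝ) (Set.Ioi 0)) (nhds 1) :=
      h.V_one.comp t1
    have t3 := (Real.continuousAt_log one_ne_zero).tendsto.comp t2
    rwa [Real.log_one] at t3
  -- elements of the set
  have elem : ∀ r : ℝ, 0 < r → ∀ t : ℝ, 0 < t →
      V ρ (r * t) / V ρ r = Real.exp (g (Real.log r + Real.log t) - g (Real.log r)) := by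
    intro r hr t ht
    rw [Real.exp_sub, hVexp r hr, ← Real.log_mul hr.ne' ht.ne', hVexp _ (mul_pos hr ht)]
  constructor
  · -- Part 1
    obtain ⟨A₀, hA₀⟩ := hconc
    set A : ℝ := max A₀ 1 with hA
    have hA1 : (1:ℝ) ≤ A := le_max_right _ _
    have hApos : (0:ℝ) < A := lt_of_lt_of_le one_pos hA1
    have hcA : ConcaveOn ℝ (Set.Ici A) g :=
      hA₀.subset (Set.Ici_subset_Ici.mpr (le_max_left _ _)) (convex_Ici _)
    have mono : ∀ a b : ℝ, A ≤ a → a ≤ b → g a ≤ g b := by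
      intro a b ha hab
      exact aux_mono hcA htop ha hab (Set.Ici_subset_Ici.mpr (le_trans ha hab))
    have four : ∀ a b t : ℝ, A ≤ a → a ≤ b → 0 ≤ t → g a + g (b + t) ≤ g (a + t) + g b := by
      intro a b t ha hab ht
      exact aux_four hcA ha (by simp only [Set.mem_Ici]; linarith) hab ht
    -- bound B on (0, 2A]
    obtain ⟨δ, hδpos, hδ⟩ : ∃ δ : ℝ, 0 < δ ∧ ∀ x : ℝ, 0 < x → x ≤ δ → |g x| ≤ 1 := by
      have hev : ∀ᶠ x in nhdsWithin (0:ℝ) (Set.Ioi 0), |g x| ≤ 1 := by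
        have : ∀ᶠ y in nhds (0:ℝ), |y| ≤ 1 := by
          have : Set.Icc (-1:ℝ) 1 ∈ nhds (0:ℝ) := Icc_mem_nhds (by norm_num) (by norm_num)
          filter_upwards [this] with y hy
          exact abs_le.mpr ⟨hy.1, hy.2⟩
        exact hzero.eventually this
      rw [eventually_iff, mem_nhdsGT_iff_exists_Ioc_subset] at hev
      obtain ⟨u, hu, hsub⟩ := hev
      exact ⟨u, mem_Ioi.mp hu, fun x hx1 hx2 => hsub ⟨hx1, hx2⟩⟩
    obtain ⟨C, hC⟩ : ∃ C : ℝ, ∀ x ∈ Set.Icc δ (2*A), |g x| ≤ C := by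
      have hcomp : IsCompact (Set.Icc δ (2*A)) := isCompact_Icc
      have hco : ContinuousOn g (Set.Icc δ (2*A)) := fun x hx =>
        (hcont x (lt_of_lt_of_le hδpos hx.1)).continuousWithinAt
      obtain ⟨C, hC⟩ := hcomp.exists_bound_of_continuousOn hco
      exact ⟨C, fun x hx => by simpa using hC x hx⟩
    set B : ℝ := max 1 C with hB
    have hB1 : (1:ℝ) ≤ B := le_max_left _ _
    have hBpos : (0:ℝ) < B := lt_of_lt_of_le one_pos hB1
    have F1 : ∀ y : ℝ, 0 ≤ y → y ≤ 2*A → |g y| ≤ B := by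
      intro y hy1 hy2
      rcases hy1.eq_or_lt with rfl | hy1
      · rw [hg0]; simpa using hBpos.le
      rcases le_or_gt y δ with hyd | hyd
      · exact le_trans (hδ y hy1 hyd) hB1
      · exact le_trans (hC y ⟨hyd.le, hy2⟩) (le_max_right _ _)
    have F1abs : ∀ y : ℝ, |y| ≤ 2*A → |g y| ≤ B := by
      intro y hy
      rcases le_or_gt 0 y with h0 | h0
      · exact F1 y h0 (by rwa [abs_of_nonneg h0] at hy)
      · rw [← heven y]
        exact F1 (-y) (by linarith) (by rwa [abs_of_neg h0] at hy)
    have F2 : ∀ s : ℝ, 0 ≤ s → -B ≤ g s := by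
      intro s hs
      rcases le_or_gt s (2*A) with h1 | h1
      · have := F1 s hs h1; rw [abs_le] at this; linarith [this.1]
      · have h2 : g A ≤ g s := mono A s le_rfl (by linarith)
        have h3 := F1 A hApos.le (by linarith)
        rw [abs_le] at h3; linarith [h3.1]
    have F6 : ∀ s : ℝ, 0 ≤ s → g (A + s) ≤ g s + 2*B := by
      intro s hs
      rcases le_or_gt s A with h1 | h1
      · have h2 : |g (A + s)| ≤ B := F1 (A + s) (by linarith) (by linarith)
        rw [abs_le] at h2
        have := F2 s hs
        linarith [h2.2]
      · have h2 := four A s A le_rfl h1.le hApos.le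
        have h3 : |g (A + A)| ≤ B := F1 (A + A) (by linarith) (by linarith)
        have h4 : |g A| ≤ B := F1 A hApos.le (by linarith)
        rw [abs_le] at h3 h4
        have e : s + A = A + s := by ring
        rw [e] at h2
        linarith [h3.2, h4.1]
    have main1 : ∀ s : ℝ, 0 ≤ s → ∀ x : ℝ, g (x + s) ≤ g x + g s + 3*B := by
      intro s hs x
      rcases le_or_gt A x with hx | hx
      · have h2 := four A x s le_rfl hx hs
        have h4 : |g A| ≤ B := F1 A hApos.le (by linarith)
        rw [abs_le] at h4
        have h5 := F6 s hs
        linarith [h4.1]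
      rcases le_or_gt x (-A) with hx2 | hx2
      · have hxe : g x = g (-x) := (heven x).symm
        have hxlb : -B ≤ g x := by
          rw [hxe]
          have := mono A (-x) le_rfl (by linarith)
          have h4 := F1 A hApos.le (by linarith)
          rw [abs_le] at h4
          linarith [h4.1]
        rcases le_or_gt (x + s) (-A) with hxs | hxs
        · have e : g (x + s) = g (-(x+s)) := (heven (x+s)).symm
          have h2 : g (-(x+s)) ≤ g (-x) := mono (-(x+s)) (-x) (by linarith) (by linarith)
          have := F2 s hs
          rw [e]
          rw [hxe]
          linarith
        · rcases le_or_gt (x + s) (2*A) with hxs2 | hxs2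
          · have h2 : |g (x+s)| ≤ B := F1abs _ (abs_le.mpr ⟨by linarith, hxs2⟩)
            rw [abs_le] at h2
            have := F2 s hs
            linarith [h2.2]
          · have h2 : g (x + s) ≤ g s := mono (x+s) s (by linarith) (by linarith)
            have := F2 s hs
            linarith
      · -- -A < x < A
        have hxlb : -B ≤ g x := by
          have h2 : |g x| ≤ B := F1abs x (abs_le.mpr ⟨by linarith, by linarith⟩)
          rw [abs_le] at h2; exact h2.1
        rcases le_or_gt (x + s) (2*A) with hxs | hxs
        · have h2 : |g (x+s)| ≤ B := F1abs _ (abs_le.mpr ⟨by linarith, hxs⟩)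
          rw [abs_le] at h2
          have := F2 s hs
          linarith [h2.2]
        · have hsA : A ≤ s := by linarith
          have h2 : g (x + s) ≤ g (A + s) := mono (x+s) (A+s) (by linarith) (by linarith)
          have h3 := F6 s hs
          linarith
    refine ⟨Real.exp (3*B), ?_⟩
    intro t ht
    have ht0 : (0:ℝ) < t := lt_of_lt_of_le one_pos ht
    apply Real.sSup_le
    · rintro y ⟨r, hr, rfl⟩
      rw [elem r hr t ht0]
      have hlt : 0 ≤ Real.log t := Real.log_nonneg ht
      have := main1 (Real.log t) hlt (Real.log r)
      calc Real.exp (g (Real.log r + Real.log t) - g (Real.log r))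
          ≤ Real.exp (g (Real.log t) + 3*B) := Real.exp_le_exp.mpr (by linarith)
        _ = Real.exp (3*B) * V ρ t := by
            rw [Real.exp_add, hVexp t ht0, mul_comm]
    · exact (mul_pos (Real.exp_pos _) (hVpos t ht0)).le
  · -- Part 2
    intro hc2 t ht
    have ht0 : (0:ℝ) < t := lt_of_lt_of_le one_pos ht
    have mono2 : ∀ a b : ℝ, 0 < a → a ≤ b → g a ≤ g b := by
      intro a b ha hab
      exact aux_mono hc2 htop ha hab (fun y hy => lt_of_lt_of_le (lt_of_lt_of_le ha hab) hy)
    have nonneg2 : ∀ y : ℝ, 0 < y → 0 ≤ g y := by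
      intro y hy
      have hev : ∀ᶠ ε in nhdsWithin (0:ℝ) (Set.Ioi 0), g ε ≤ g y := by
        filter_upwards [Ioc_mem_nhdsGT_of_mem ⟨le_refl (0:ℝ), hy⟩] with ε hε
        exact mono2 ε y hε.1 hε.2
      exact le_of_tendsto hzero hev
    have key2 : ∀ s : ℝ, 0 ≤ s → ∀ x : ℝ, g (x + s) ≤ g x + g s := by
      intro s hs x
      rcases hs.eq_or_lt with rfl | hs
      · rw [add_zero, hg0, add_zero]
      rcases lt_trichotomy x 0 with hx | hx | hx
      · have hxe : g x = g (-x) := (heven x).symm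
        have hx0 : 0 ≤ g x := by rw [hxe]; exact nonneg2 _ (by linarith)
        have hs0 : 0 ≤ g s := nonneg2 s hs
        rcases lt_trichotomy (x + s) 0 with hxs | hxs | hxs
        · have e : g (x + s) = g (-(x+s)) := (heven (x+s)).symm
          have h2 : g (-(x+s)) ≤ g (-x) := mono2 (-(x+s)) (-x) (by linarith) (by linarith)
          rw [e, hxe]; linarith
        · rw [hxs, hg0]; linarith
        · have h2 : g (x + s) ≤ g s := mono2 (x+s) s hxs (by linarith)
          linarith
      · rw [hx, zero_add, hg0, zero_add]
      · -- x > 0 : limiting four-point argument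
        have hev : ∀ᶠ ε in nhdsWithin (0:ℝ) (Set.Ioi 0),
            g (x + s) ≤ g (ε + s) + g x - g ε := by
          filter_upwards [Ioc_mem_nhdsGT_of_mem ⟨le_refl (0:ℝ), hx⟩] with ε hε
          have h4 := aux_four hc2 (a := ε) (b := x) (t := s)
            (mem_Ioi.mpr hε.1) (mem_Ioi.mpr (by linarith)) hε.2 hs.le
          linarith
        have hlim : Tendsto (fun ε => g (ε + s) + g x - g ε)
            (nhdsWithin (0:ℝ) (Set.Ioi 0)) (nhds (g s + g x - 0)) := by
          apply Tendsto.sub _ hzero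
          apply Tendsto.add _ tendsto_const_nhds
          have h1 : Tendsto (fun ε : ℝ => ε + s) (nhdsWithin (0:ℝ) (Set.Ioi 0)) (nhds s) := by
            have hb : Tendsto (fun ε : ℝ => ε + s) (nhds (0:ℝ)) (nhds (0 + s)) :=
              (continuous_id.add continuous_const).tendsto 0
            rw [zero_add] at hb
            exact hb.mono_left nhdsWithin_le_nhds
          exact (hcont s hs).tendsto.comp h1
        have := ge_of_tendsto hlim hev
        linarith
    have hub : ∀ y ∈ {y : ℝ | ∃ r : ℝ, 0 < r ∧ y = V ρ (r * t) / V ρ r}, y ≤ V ρ t := by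
      rintro y ⟨r, hr, rfl⟩
      rw [elem r hr t ht0]
      have hlt : 0 ≤ Real.log t := Real.log_nonneg ht
      have := key2 (Real.log t) hlt (Real.log r)
      calc Real.exp (g (Real.log r + Real.log t) - g (Real.log r))
          ≤ Real.exp (g (Real.log t)) := Real.exp_le_exp.mpr (by linarith)
        _ = V ρ t := hVexp t ht0
    have hmem : V ρ t ∈ {y : ℝ | ∃ r : ℝ, 0 < r ∧ y = V ρ (r * t) / V ρ r} := by
      exact ⟨1, one_pos, by rw [one_mul, hV1, div_one]⟩
    unfold gamma0
    apply le_antisymm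
    · exact Real.sSup_le hub (hVpos t ht0).le
    · exact le_csSup ⟨V ρ t, hub⟩ hmem


end
end

section
/- Let ρ be a proximate order with limit ρ∞, let μ ∈ 𝔐_∞(ρ), let tₙ → ∞ be a sequence such that μ_{tₙ} converges widely to ν, and let τₙ be a sequence converging to a number τ > 0. Then μ_{τₙ tₙ} converges widely to ν_τ, where ν_τ(E) = ν(τE)/τ^{ρ∞}. -/
open MeasureTheory Filter Topology Set
open scoped ENNReal

noncomputable section

/-- A (real or complex) Radon measure on `(0,∞)`, given in polar form: its
total variation `var` (a positive Borel measure, finite on compact subsets of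
`(0,∞)` and concentrated on `(0,∞)`) together with a measurable, a.e.
unimodular direction density `dir`, so that `dμ = dir · d var`. -/
structure RadonC where
  var : Measure ℝ
  dir : ℝ → ℂ
  measurable_dir : Measurable dir
  unimodular : ∀ᵐ x ∂var, ‖dir x‖ = 1
  locFin : ∀ a b : ℝ, 0 < a → var (Set.Icc a b) < ⊤
  conc : var (Set.Iic 0) = 0

/-- Value of the measure on a set: `μ(E) = ∫_E dir d var`. -/
def RadonC.set (μ : RadonC) (E : Set ℝ) : ℂ := ∫ x in E, μ.dir x ∂μ.var

/-- Integral of a real function against the measure. -/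
def RadonC.testInt (μ : RadonC) (f : ℝ → ℝ) : ℂ := ∫ x, (f x : ℂ) * μ.dir x ∂μ.var

/-- Test functions: continuous with compact support contained in `(0,∞)`. -/
def IsTest (f : ℝ → ℝ) : Prop :=
  Continuous f ∧ HasCompactSupport f ∧ tsupport f ⊆ Set.Ioi 0

/-- `∫ f dμ_t`, where `μ_t(E) = μ(tE)/V(t)`. -/
def scaledTestInt (ρ : ℝ → ℝ) (μ : RadonC) (t : ℝ) (f : ℝ → ℝ) : ℂ :=
  (V ρ t : ℂ)⁻¹ * ∫ x, (f (x / t) : ℂ) * μ.dir x ∂μ.var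

/-- Wide convergence of the scalings `μ_{t n}` to `ν`. -/
def WideTendsto (ρ : ℝ → ℝ) (μ : RadonC) (t : ℕ → ℝ) (ν : RadonC) : Prop :=
  ∀ f : ℝ → ℝ, IsTest f →
    Filter.Tendsto (fun n => scaledTestInt ρ μ (t n) f) Filter.atTop (nhds (ν.testInt f))

/-- The Azarin limit set `Fr[μ]` of `μ` relative to the proximate order `ρ`. -/
def AzarinSet (ρ : ℝ → ℝ) (μ : RadonC) : Set RadonC :=
  {ν | ∃ t : ℕ → ℝ, Filter.Tendsto t Filter.atTop Filter.atTop ∧ WideTendsto ρ μ t ν}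

/-- `μ ∈ 𝔐_∞(ρ)` : `sup_{r ≥ 1} |μ|([r, e r])/V(r) < ∞`. -/
def MemMInfty (ρ : ℝ → ℝ) (μ : RadonC) : Prop :=
  ∃ C : ℝ, ∀ r : ℝ, 1 ≤ r → μ.var (Set.Icc r (Real.exp 1 * r)) ≤ ENNReal.ofReal (C * V ρ r)

/-- Equality of Radon measures on `(0,∞)` (tested against test functions). -/
def WideEq (ν₁ ν₂ : RadonC) : Prop := ∀ f : ℝ → ℝ, IsTest f → ν₁.testInt f = ν₂.testInt f

/-- Support bounds for a test function. -/
lemma testBounds (f : ℝ → ℝ) (hf : IsTest f) :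
    ∃ a b : ℝ, 0 < a ∧ a ≤ b ∧ tsupport f ⊆ Icc a b := by
  rcases (tsupport f).eq_empty_or_nonempty with he | hne
  · exact ⟨1, 1, one_pos, le_refl _, by rw [he]; exact empty_subset _⟩
  · have hK : IsCompact (tsupport f) := hf.2.1
    refine ⟨sInf (tsupport f), sSup (tsupport f), hf.2.2 (hK.sInf_mem hne),
      csInf_le_csSup hne hK.bddBelow hK.bddAbove, fun x hx =>
        ⟨csInf_le hK.bddBelow hx, le_csSup hK.bddAbove hx⟩⟩

set_option maxHeartbeats 1000000 in
lemma lemVratio (ρ : ℝ → ℝ) (l : ℝ) (h : IsProximateOrder ρ l)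
    (t τ : ℕ → ℝ) (ht : Tendsto t atTop atTop) (τ₀ : ℝ) (hτ₀ : 0 < τ₀)
    (hτ : Tendsto τ atTop (nhds τ₀)) :
    Tendsto (fun n => V ρ (t n) / V ρ (τ n * t n)) atTop (nhds (τ₀ ^ (-l))) := by
  have hτpos : ∀ᶠ n in atTop, τ₀/2 < τ n := hτ.eventually (eventually_gt_nhds (by linarith))
  have hτlt : ∀ᶠ n in atTop, τ n < 2*τ₀ := hτ.eventually (eventually_lt_nhds (by linarith))
  have hst : Tendsto (fun n => τ n * t n) atTop atTop := by
    apply tendsto_atTop_mono' atTop (f₁ := fun n => (τ₀/2) * t n)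
    · filter_upwards [hτpos, ht.eventually_ge_atTop 0] with n h1 h2
      exact mul_le_mul_of_nonneg_right h1.le h2
    · exact ht.const_mul_atTop (half_pos hτ₀)
  -- the hard term
  have hD : Tendsto (fun n => (ρ (τ n * t n) - ρ (t n)) * Real.log (t n)) atTop (nhds 0) := by
    rw [NormedAddCommGroup.tendsto_nhds_zero]
    intro ε hε
    set m : ℝ := min 1 (τ₀/2) with hm_def
    have hm : 0 < m := lt_min one_pos (half_pos hτ₀)
    have hm1 : m ≤ 1 := min_le_left _ _
    set M : ℝ := max 1 (2*τ₀) with hM_def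
    have hM : 1 ≤ M := le_max_left _ _
    set c : ℝ := 2*M/m with hc_def
    have hc : 0 < c := by positivity
    set ε₁ : ℝ := ε / (c+1) with hε₁_def
    have hε₁ : 0 < ε₁ := by positivity
    have hder := Metric.tendsto_nhds.mp h.tendsto_deriv ε₁ hε₁
    rw [eventually_atTop] at hder
    obtain ⟨R, hR⟩ := hder
    set L₀ : ℝ := 2*(1 - Real.log m) with hL₀
    filter_upwards [hτpos, hτlt, ht.eventually_ge_atTop (R/m), ht.eventually_ge_atTop 1,
      ht.eventually_ge_atTop (Real.exp L₀)] with n h1 h2 h3 h4 h5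
    have htn : (0:ℝ) < t n := lt_of_lt_of_le one_pos h4
    have hτn : 0 < τ n := lt_trans (half_pos hτ₀) h1
    have hlogm : Real.log m ≤ 0 := Real.log_nonpos hm.le hm1
    have hlogt : L₀ ≤ Real.log (t n) := by
      calc L₀ = Real.log (Real.exp L₀) := (Real.log_exp _).symm
      _ ≤ Real.log (t n) := Real.log_le_log (Real.exp_pos _) h5
    have hlogt0 : 0 ≤ Real.log (t n) := by
      have : (0:ℝ) ≤ L₀ := by rw [hL₀]; linarith
      linarith
    have hlmt : Real.log (m * t n) = Real.log m + Real.log (t n) := Real.log_mul hm.ne' htn.ne'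
    have hkey1 : Real.log (t n) ≤ 2 * Real.log (m * t n) := by rw [hlmt]; rw [hL₀] at hlogt; nlinarith
    have hkey2 : 1 ≤ Real.log (m * t n) := by rw [hlmt]; rw [hL₀] at hlogt; nlinarith
    have hlmtpos : 0 < Real.log (m * t n) := lt_of_lt_of_le one_pos hkey2
    set p := min (t n) (τ n * t n) with hp_def
    set q := max (t n) (τ n * t n) with hq_def
    have hpq : p ≤ q := min_le_max
    have hmp : m * t n ≤ p := by
      rcases le_total (τ n * t n) (t n) with hc1 | hc1
      · rw [hp_def, min_eq_right hc1]
        have : m ≤ τ₀/2 := min_le_right _ _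
        nlinarith
      · rw [hp_def, min_eq_left hc1]
        nlinarith
    have hppos : 0 < p := lt_of_lt_of_le (by positivity) hmp
    obtain ⟨hint, hrepr⟩ := h.locAC p hppos q hpq
    have hρq : ρ q = ρ p + ∫ x in p..q, deriv ρ x := hrepr q ⟨hpq, le_refl q⟩
    have hm0 : m ≠ 0 := hm.ne'
    have hmR : R ≤ m * t n := by
      rw [div_le_iff₀ hm] at h3
      linarith
    have hmtlogpos : 0 < m * t n * Real.log (m * t n) := by positivity
    set Cb : ℝ := ε₁ / (m * t n * Real.log (m * t n)) with hCb_def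
    have hCb0 : 0 ≤ Cb := le_of_lt (div_pos hε₁ hmtlogpos)
    have hbnd : ∀ x ∈ Set.uIoc p q, ‖deriv ρ x‖ ≤ Cb := by
      intro x hx
      rw [Set.uIoc_of_le hpq] at hx
      have hxp : m * t n ≤ x := le_trans hmp hx.1.le
      have hmt1 : 1 < m * t n := by
        by_contra hcon
        push_neg at hcon
        have := Real.log_nonpos (by positivity) hcon
        linarith
      have hx1 : 1 < x := lt_of_lt_of_le hmt1 hxp
      have hlogx : Real.log (m * t n) ≤ Real.log x := Real.log_le_log (by positivity) hxp
      have hlogx0 : 0 < Real.log x := lt_of_lt_of_le hlmtpos hlogx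
      have hd := hR x (le_trans hmR hxp)
      rw [Real.dist_eq, sub_zero] at hd
      have h7 : |x * Real.log x * deriv ρ x| = x * Real.log x * |deriv ρ x| := by
        rw [abs_mul, abs_of_nonneg (by positivity : (0:ℝ) ≤ x * Real.log x)]
      rw [Real.norm_eq_abs, hCb_def, le_div_iff₀ hmtlogpos]
      have hxlog : m * t n * Real.log (m * t n) ≤ x * Real.log x :=
        mul_le_mul hxp hlogx hlmtpos.le (by positivity)
      calc |deriv ρ x| * (m * t n * Real.log (m * t n))
          ≤ |deriv ρ x| * (x * Real.log x) :=
            mul_le_mul_of_nonneg_left hxlog (abs_nonneg _)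
        _ = |x * Real.log x * deriv ρ x| := by rw [h7]; ring
        _ ≤ ε₁ := hd.le
    have hIb : ‖∫ x in p..q, deriv ρ x‖ ≤ Cb * |q - p| :=
      intervalIntegral.norm_integral_le_of_norm_le_const hbnd
    have hqp : q - p = |τ n - 1| * t n := by
      rw [hq_def, hp_def, max_sub_min_eq_abs]
      have h8 : τ n * t n - t n = (τ n - 1) * t n := by ring
      rw [h8, abs_mul, abs_of_nonneg htn.le]
    have hτ1 : |τ n - 1| ≤ M := by
      rw [abs_le]
      have hM2 : 2*τ₀ ≤ M := le_max_right _ _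
      constructor <;> linarith
    have hdiff : |ρ (τ n * t n) - ρ (t n)| = ‖∫ x in p..q, deriv ρ x‖ := by
      have hqps : ρ q - ρ p = ∫ x in p..q, deriv ρ x := by rw [hρq]; ring
      rw [Real.norm_eq_abs, ← hqps]
      rcases le_total (t n) (τ n * t n) with hc1 | hc1
      · rw [hp_def, hq_def, min_eq_left hc1, max_eq_right hc1]
      · rw [hp_def, hq_def, min_eq_right hc1, max_eq_left hc1, abs_sub_comm]
    have hcm : c * m = 2*M := by rw [hc_def]; field_simp
    have keyineq : Cb * (M * t n) * Real.log (t n) ≤ ε₁ * c := by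
      rw [hCb_def, div_mul_eq_mul_div, div_mul_eq_mul_div, div_le_iff₀ hmtlogpos]
      calc ε₁ * (M * t n) * Real.log (t n)
          ≤ ε₁ * (M * t n) * (2*Real.log (m * t n)) := by
            apply mul_le_mul_of_nonneg_left hkey1
            exact mul_nonneg hε₁.le (mul_nonneg (by linarith : (0:ℝ) ≤ M) htn.le)
        _ = ε₁ * c * (m * t n * Real.log (m * t n)) := by
            rw [hc_def]; field_simp
    have hfin : ε₁ * c < ε := by
      have h9 : ε₁ * (c+1) = ε := div_mul_cancel₀ ε (by positivity)
      have h10 : ε₁*c + ε₁ = ε := by rw [← h9]; ring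
      linarith
    calc ‖(ρ (τ n * t n) - ρ (t n)) * Real.log (t n)‖
        = |ρ (τ n * t n) - ρ (t n)| * Real.log (t n) := by
          rw [Real.norm_eq_abs, abs_mul, abs_of_nonneg hlogt0]
      _ ≤ (Cb * |q - p|) * Real.log (t n) := by
          apply mul_le_mul_of_nonneg_right _ hlogt0
          rw [hdiff]; exact hIb
      _ = Cb * (|τ n - 1| * t n) * Real.log (t n) := by
          rw [abs_of_nonneg (by linarith : (0:ℝ) ≤ q - p), hqp]
      _ ≤ Cb * (M * t n) * Real.log (t n) := by
          apply mul_le_mul_of_nonneg_right _ hlogt0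
          apply mul_le_mul_of_nonneg_left _ hCb0
          exact mul_le_mul_of_nonneg_right hτ1 htn.le
      _ ≤ ε₁ * c := keyineq
      _ < ε := hfin
  -- assemble
  have hA : Tendsto (fun n => -(ρ (τ n * t n) * Real.log (τ n))) atTop
      (nhds (-(l * Real.log τ₀))) :=
    ((h.tendsto_lim.comp hst).mul
      (((Real.continuousAt_log hτ₀.ne').tendsto).comp hτ)).neg
  have hE : Tendsto (fun n => Real.log (t n) * ρ (t n) - Real.log (τ n * t n) * ρ (τ n * t n))
      atTop (nhds (-(l * Real.log τ₀))) := by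
    have hsum := hA.sub hD
    rw [sub_zero] at hsum
    apply hsum.congr'
    filter_upwards [hτpos, ht.eventually_gt_atTop 0] with n h1 h2
    have hτn : 0 < τ n := lt_trans (half_pos hτ₀) h1
    rw [Real.log_mul hτn.ne' h2.ne']
    ring
  have hexp := (Real.continuous_exp.tendsto _).comp hE
  have hval : τ₀ ^ (-l) = Real.exp (-(l * Real.log τ₀)) := by
    rw [Real.rpow_def_of_pos hτ₀]; ring_nf
  rw [hval]
  apply hexp.congr'
  filter_upwards [hτpos, ht.eventually_gt_atTop 0] with n h1 h2
  have hτn : 0 < τ n := lt_trans (half_pos hτ₀) h1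
  have hv1 : V ρ (t n) = Real.exp (Real.log (t n) * ρ (t n)) := Real.rpow_def_of_pos h2 _
  have hv2 : V ρ (τ n * t n) = Real.exp (Real.log (τ n * t n) * ρ (τ n * t n)) :=
    Real.rpow_def_of_pos (mul_pos hτn h2) _
  simp only [Function.comp]
  rw [hv1, hv2, ← Real.exp_sub]

lemma lemVratio' (ρ : ℝ → ℝ) (l : ℝ) (h : IsProximateOrder ρ l)
    (t : ℕ → ℝ) (ht : Tendsto t atTop atTop) (a : ℝ) (ha : 0 < a) :
    Tendsto (fun n => V ρ (a * t n) / V ρ (t n)) atTop (nhds (a ^ l)) := by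
  have h1 := lemVratio ρ l h (fun n => a * t n) (fun _ => a⁻¹)
    (ht.const_mul_atTop ha) a⁻¹ (inv_pos.mpr ha) tendsto_const_nhds
  have h2 : ∀ n : ℕ, a⁻¹ * (a * t n) = t n := by
    intro n; field_simp
  simp only [h2] at h1
  have h3 : (a⁻¹ : ℝ) ^ (-l) = a ^ l := by
    rw [Real.inv_rpow ha.le, ← Real.rpow_neg ha.le, neg_neg]
  rwa [h3] at h1

lemma oneStep (ρ : ℝ → ℝ) (l : ℝ) (h : IsProximateOrder ρ l)
    (μ : RadonC) (hμ : MemMInfty ρ μ)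
    (t : ℕ → ℝ) (ht : Tendsto t atTop atTop) (a : ℝ) (ha : 0 < a) :
    ∃ C : ℝ, 0 ≤ C ∧ ∀ᶠ n in atTop,
      μ.var (Icc (a * t n) (Real.exp 1 * (a * t n))) ≤ ENNReal.ofReal (C * V ρ (t n)) := by
  obtain ⟨C₀, hC₀⟩ := hμ
  set D : ℝ := a ^ l + 1 with hD_def
  have hD : 0 < D := by positivity
  refine ⟨max C₀ 0 * D, mul_nonneg (le_max_right _ _) hD.le, ?_⟩
  have hev1 : ∀ᶠ n in atTop, V ρ (a * t n) / V ρ (t n) < D :=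
    (lemVratio' ρ l h t ht a ha).eventually (eventually_lt_nhds (by rw [hD_def]; linarith))
  filter_upwards [hev1, ht.eventually_ge_atTop (1/a), ht.eventually_gt_atTop 0] with n h1 h2 h3
  have hat : 1 ≤ a * t n := by
    rw [mul_comm]; rw [div_le_iff₀ ha] at h2; linarith
  have hVpos : 0 < V ρ (t n) := Real.rpow_pos_of_pos h3 _
  have hVineq : V ρ (a * t n) ≤ D * V ρ (t n) := by
    rw [div_lt_iff₀ hVpos] at h1; linarith
  calc μ.var (Icc (a * t n) (Real.exp 1 * (a * t n)))
      ≤ ENNReal.ofReal (C₀ * V ρ (a * t n)) := hC₀ _ hat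
    _ ≤ ENNReal.ofReal (max C₀ 0 * D * V ρ (t n)) := by
        apply ENNReal.ofReal_le_ofReal
        have hVa : 0 < V ρ (a * t n) := Real.rpow_pos_of_pos (by positivity) _
        calc C₀ * V ρ (a * t n) ≤ max C₀ 0 * V ρ (a * t n) :=
              mul_le_mul_of_nonneg_right (le_max_left _ _) hVa.le
          _ ≤ max C₀ 0 * (D * V ρ (t n)) :=
              mul_le_mul_of_nonneg_left hVineq (le_max_right _ _)
          _ = max C₀ 0 * D * V ρ (t n) := by ring

lemma massBoundExp (ρ : ℝ → ℝ) (l : ℝ) (h : IsProximateOrder ρ l)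
    (μ : RadonC) (hμ : MemMInfty ρ μ)
    (t : ℕ → ℝ) (ht : Tendsto t atTop atTop) :
    ∀ k : ℕ, ∀ a : ℝ, 0 < a → ∃ C : ℝ, 0 ≤ C ∧ ∀ᶠ n in atTop,
      μ.var (Icc (a * t n) (a * Real.exp k * t n)) ≤ ENNReal.ofReal (C * V ρ (t n)) := by
  intro k
  induction k with
  | zero =>
    intro a ha
    obtain ⟨C, hC0, hC⟩ := oneStep ρ l h μ hμ t ht a ha
    refine ⟨C, hC0, ?_⟩
    filter_upwards [hC, ht.eventually_ge_atTop 0] with n h1 h2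
    refine le_trans (measure_mono (Icc_subset_Icc_right ?_)) h1
    have he1 : (1:ℝ) ≤ Real.exp 1 := Real.one_le_exp (le_of_lt one_pos)
    push_cast
    rw [Real.exp_zero]
    nlinarith [mul_nonneg ha.le h2, he1]
  | succ k ih =>
    intro a ha
    obtain ⟨C1, hC10, hC1⟩ := ih a ha
    obtain ⟨C2, hC20, hC2⟩ := oneStep ρ l h μ hμ t ht (a * Real.exp k) (by positivity)
    refine ⟨C1 + C2, by linarith, ?_⟩
    filter_upwards [hC1, hC2, ht.eventually_gt_atTop 0] with n h1 h2 h3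
    have hVpos : 0 ≤ V ρ (t n) := (Real.rpow_pos_of_pos h3 _).le
    have hexp : a * Real.exp ((k:ℕ)+1 : ℕ) * t n = Real.exp 1 * (a * Real.exp k * t n) := by
      push_cast
      rw [Real.exp_add]
      ring
    have hsub : Icc (a * t n) (a * Real.exp ((k:ℕ)+1 : ℕ) * t n) ⊆
        Icc (a * t n) (a * Real.exp k * t n) ∪
        Icc (a * Real.exp k * t n) (Real.exp 1 * (a * Real.exp k * t n)) := by
      intro x hx
      rcases le_total x (a * Real.exp k * t n) with hc | hc
      · exact Or.inl ⟨hx.1, hc⟩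
      · exact Or.inr ⟨hc, by rw [← hexp]; exact hx.2⟩
    calc μ.var (Icc (a * t n) (a * Real.exp ((k:ℕ)+1 : ℕ) * t n))
        ≤ μ.var (Icc (a * t n) (a * Real.exp k * t n)) +
          μ.var (Icc (a * Real.exp k * t n) (Real.exp 1 * (a * Real.exp k * t n))) :=
          le_trans (measure_mono hsub) (measure_union_le _ _)
      _ ≤ ENNReal.ofReal (C1 * V ρ (t n)) + ENNReal.ofReal (C2 * V ρ (t n)) := add_le_add h1 h2
      _ = ENNReal.ofReal ((C1 + C2) * V ρ (t n)) := by
          rw [← ENNReal.ofReal_add (mul_nonneg hC10 hVpos) (mul_nonneg hC20 hVpos)]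
          ring_nf

lemma massBound (ρ : ℝ → ℝ) (l : ℝ) (h : IsProximateOrder ρ l)
    (μ : RadonC) (hμ : MemMInfty ρ μ)
    (t : ℕ → ℝ) (ht : Tendsto t atTop atTop) (a b : ℝ) (ha : 0 < a) :
    ∃ C : ℝ, 0 ≤ C ∧ ∀ᶠ n in atTop,
      μ.var (Icc (a * t n) (b * t n)) ≤ ENNReal.ofReal (C * V ρ (t n)) := by
  obtain ⟨k, hk⟩ := exists_nat_ge (b/a)
  have hbk : b ≤ a * Real.exp k := by
    have h1 : (k:ℝ) ≤ Real.exp k := by linarith [Real.add_one_le_exp (k:ℝ)]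
    rw [div_le_iff₀ ha] at hk
    nlinarith
  obtain ⟨C, hC0, hC⟩ := massBoundExp ρ l h μ hμ t ht k a ha
  refine ⟨C, hC0, ?_⟩
  filter_upwards [hC, ht.eventually_ge_atTop 0] with n h1 h2
  refine le_trans (measure_mono (Icc_subset_Icc_right ?_)) h1
  nlinarith

lemma integLemma (μ : RadonC) {f : ℝ → ℝ} (hf : IsTest f) {s : ℝ} (hs : 0 < s) :
    Integrable (fun x => ((f (x / s) : ℝ) : ℂ) * μ.dir x) μ.var := by
  obtain ⟨a, b, ha, hab, hsupp⟩ := testBounds f hf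
  obtain ⟨Mf, hMf⟩ := hf.1.bounded_above_of_compact_support hf.2.1
  set F : ℝ → ℂ := fun x => ((f (x / s) : ℝ) : ℂ) * μ.dir x with hF_def
  have hFz : ∀ x, x ∉ Icc (a*s) (b*s) → F x = 0 := by
    intro x hx
    have hns : x / s ∉ tsupport f := by
      intro hmem
      obtain ⟨h1, h2⟩ := hsupp hmem
      exact hx ⟨by rw [le_div_iff₀ hs] at h1; linarith,
        by rw [div_le_iff₀ hs] at h2; linarith⟩
    simp [hF_def, image_eq_zero_of_notMem_tsupport hns]
  have hFind : F = (Icc (a*s) (b*s)).indicator F := by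
    funext x
    by_cases hx : x ∈ Icc (a*s) (b*s)
    · rw [indicator_of_mem hx]
    · rw [indicator_of_notMem hx, hFz x hx]
  have hmeas : AEStronglyMeasurable F μ.var := by
    apply Measurable.aestronglyMeasurable
    exact (Complex.measurable_ofReal.comp
      (hf.1.measurable.comp (measurable_id.div_const s))).mul μ.measurable_dir
  rw [hFind, integrable_indicator_iff measurableSet_Icc]
  apply Measure.integrableOn_of_bounded (M := Mf)
  · exact (μ.locFin (a*s) (b*s) (by positivity)).ne
  · exact hmeas
  · apply ae_restrict_of_ae
    filter_upwards [μ.unimodular] with x hx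
    rw [hF_def]
    calc ‖((f (x / s) : ℝ) : ℂ) * μ.dir x‖ = ‖f (x/s)‖ * ‖μ.dir x‖ := by
          rw [norm_mul, Complex.norm_real]
      _ = ‖f (x/s)‖ := by rw [hx, mul_one]
      _ ≤ Mf := hMf _

set_option maxHeartbeats 1000000 in
/-- Theorem 3.13: if `μ ∈ 𝔐_∞(ρ)`, `tₙ → ∞`, `μ_{tₙ} → ν`
widely, and `τₙ → τ > 0`, then `μ_{τₙ tₙ} → ν_τ` widely, where
`ν_τ(E) = ν(τE)/τ^{ρ∞}` (so `∫ f dν_τ = τ^{-ρ∞} ∫ f(x/τ) dν(x)`). -/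
theorem statement6 (ρ : ℝ → ℝ) (l : ℝ) (h : IsProximateOrder ρ l)
    (μ : RadonC) (hμ : MemMInfty ρ μ)
    (t : ℕ → ℝ) (ht : Filter.Tendsto t Filter.atTop Filter.atTop)
    (ν : RadonC) (hw : WideTendsto ρ μ t ν)
    (τ : ℕ → ℝ) (τ₀ : ℝ) (hτ₀ : 0 < τ₀)
    (hτ : Filter.Tendsto τ Filter.atTop (nhds τ₀)) :
    ∀ f : ℝ → ℝ, IsTest f →
      Filter.Tendsto (fun n => scaledTestInt ρ μ (τ n * t n) f) Filter.atTop
        (nhds (((τ₀ ^ l : ℝ) : ℂ)⁻¹ * ν.testInt (fun x => f (x / τ₀)))) := by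
  intro f hf
  obtain ⟨a, b, ha, hab, hsupp⟩ := testBounds f hf
  set g : ℝ → ℝ := fun y => f (y / τ₀) with hg_def
  -- g is a test function
  have hgsupp : tsupport g ⊆ Icc (a * τ₀) (b * τ₀) := by
    apply closure_minimal _ isClosed_Icc
    intro y hy
    have : y / τ₀ ∈ tsupport f := subset_closure (by
      simpa [hg_def, Function.support] using hy)
    obtain ⟨h1, h2⟩ := hsupp this
    constructor
    · rw [le_div_iff₀ hτ₀] at h1; linarith
    · rw [div_le_iff₀ hτ₀] at h2; linarith
  have hg_test : IsTest g := by
    refine ⟨hf.1.comp (continuous_id.div_const τ₀), ?_, ?_⟩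
    · exact IsCompact.of_isClosed_subset isCompact_Icc (isClosed_tsupport g) hgsupp
    · exact subset_trans hgsupp (fun x hx => lt_of_lt_of_le (by positivity) hx.1)
  have hνg := hw g hg_test
  -- eventual positivity
  have hτpos : ∀ᶠ n in atTop, τ₀/2 < τ n := hτ.eventually (eventually_gt_nhds (by linarith))
  have hτlt : ∀ᶠ n in atTop, τ n < 2*τ₀ := hτ.eventually (eventually_lt_nhds (by linarith))
  have htpos : ∀ᶠ n in atTop, 0 < t n := ht.eventually_gt_atTop 0
  -- the intermediate sequence
  set I : ℕ → ℂ := fun n =>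
    (V ρ (t n) : ℂ)⁻¹ * ∫ x, ((f (x / t n / τ n) : ℝ) : ℂ) * μ.dir x ∂μ.var with hI_def
  -- Step 1 : I n - scaled(t n) g → 0
  have step1 : Tendsto (fun n => I n - scaledTestInt ρ μ (t n) g) atTop (nhds 0) := by
    rw [NormedAddCommGroup.tendsto_nhds_zero]
    intro ε hε
    set A : ℝ := a * (τ₀/2) with hA_def
    set B : ℝ := b * (2*τ₀) with hB_def
    have hb0 : (0:ℝ) < b := lt_of_lt_of_le ha hab
    have hA : 0 < A := mul_pos ha (half_pos hτ₀)
    have hB : 0 < B := mul_pos hb0 (by linarith)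
    obtain ⟨C, hC0, hCev⟩ := massBound ρ l h μ hμ t ht A B hA
    set ε' : ℝ := ε / (2*(C+1)) with hε'_def
    have hε' : 0 < ε' := div_pos hε (by linarith)
    have huc := hf.2.1.uniformContinuous_of_continuous hf.1
    rw [Metric.uniformContinuous_iff] at huc
    obtain ⟨δ, hδ, hδf⟩ := huc ε' hε'
    have hinv : Tendsto (fun n => (τ n)⁻¹) atTop (nhds τ₀⁻¹) := hτ.inv₀ hτ₀.ne'
    have hinvev : ∀ᶠ n in atTop, dist (τ n)⁻¹ τ₀⁻¹ < δ/B :=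
      (Metric.tendsto_nhds.mp hinv) (δ/B) (div_pos hδ hB)
    filter_upwards [hτpos, hτlt, htpos, hCev, hinvev] with n h1 h2 h3 h4 h5
    have hτn : 0 < τ n := lt_trans (half_pos hτ₀) h1
    have hVpos : 0 < V ρ (t n) := Real.rpow_pos_of_pos h3 _
    -- integrability
    have hrw1 : (fun x => ((f (x / t n / τ n) : ℝ) : ℂ) * μ.dir x)
        = fun x => ((f (x / (τ n * t n)) : ℝ) : ℂ) * μ.dir x := by
      funext x; rw [div_div, mul_comm (t n) (τ n)]
    have hi1 : Integrable (fun x => ((f (x / t n / τ n) : ℝ) : ℂ) * μ.dir x) μ.var := by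
      rw [hrw1]; exact integLemma μ hf (mul_pos hτn h3)
    have hi2 : Integrable (fun x => ((g (x / t n) : ℝ) : ℂ) * μ.dir x) μ.var :=
      integLemma μ hg_test h3
    have hdiffI : I n - scaledTestInt ρ μ (t n) g
        = (V ρ (t n) : ℂ)⁻¹ * ∫ x, (((f (x / t n / τ n) : ℝ) : ℂ) * μ.dir x
            - ((g (x / t n) : ℝ) : ℂ) * μ.dir x) ∂μ.var := by
      rw [integral_sub hi1 hi2, hI_def]
      simp only [scaledTestInt]
      ring
    -- the dominating function
    set S : Set ℝ := Icc (A * t n) (B * t n) with hS_def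
    have hfinS : μ.var S < ⊤ := μ.locFin _ _ (by positivity)
    have hd_int : Integrable (S.indicator fun _ => ε') μ.var := by
      rw [integrable_indicator_iff measurableSet_Icc]
      apply (integrableOn_const_iff (C := ε')).mpr (Or.inr hfinS)
    have hptbound : ∀ᵐ x ∂μ.var, ‖((f (x / t n / τ n) : ℝ) : ℂ) * μ.dir x
        - ((g (x / t n) : ℝ) : ℂ) * μ.dir x‖ ≤ (S.indicator fun _ => ε') x := by
      filter_upwards [μ.unimodular] with x hx
      have hnorm : ‖((f (x / t n / τ n) : ℝ) : ℂ) * μ.dir x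
          - ((g (x / t n) : ℝ) : ℂ) * μ.dir x‖ = |f (x / t n / τ n) - g (x / t n)| := by
        rw [← sub_mul, norm_mul, ← Complex.ofReal_sub, Complex.norm_real,
          hx, mul_one, Real.norm_eq_abs]
      rw [hnorm]
      by_cases hxS : x ∈ S
      · rw [indicator_of_mem hxS]
        obtain ⟨hx1, hx2⟩ := hxS
        have hy1 : A ≤ x / t n := by rw [le_div_iff₀ h3]; linarith
        have hy2 : x / t n ≤ B := by rw [div_le_iff₀ h3]; linarith
        have hclose : dist (x / t n / τ n) (x / t n / τ₀) < δ := by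
          rw [Real.dist_eq, div_div, div_div]
          have : x / (t n * τ n) - x / (t n * τ₀)
              = (x / t n) * ((τ n)⁻¹ - τ₀⁻¹) := by
            field_simp
          rw [this, abs_mul]
          have hxt : |x / t n| ≤ B := by rw [abs_of_nonneg (by linarith)]; exact hy2
          calc |x / t n| * |(τ n)⁻¹ - τ₀⁻¹| ≤ B * |(τ n)⁻¹ - τ₀⁻¹| :=
                mul_le_mul_of_nonneg_right hxt (abs_nonneg _)
            _ < B * (δ/B) := by
                apply mul_lt_mul_of_pos_left _ hB
                rw [Real.dist_eq] at h5; exact h5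
            _ = δ := by field_simp
        exact le_of_lt (hδf hclose)
      · rw [indicator_of_notMem hxS]
        have hz1 : f (x / t n / τ n) = 0 := by
          apply image_eq_zero_of_notMem_tsupport
          intro hmem
          obtain ⟨hm1, hm2⟩ := hsupp hmem
          rw [div_div, le_div_iff₀ (by positivity)] at hm1
          rw [div_div, div_le_iff₀ (by positivity)] at hm2
          refine hxS ⟨?_, ?_⟩
          · have := mul_le_mul_of_nonneg_left h1.le (mul_nonneg ha.le h3.le)
            rw [hA_def]; nlinarith
          · have := mul_le_mul_of_nonneg_left h2.le (mul_nonneg hb0.le h3.le)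
            rw [hB_def]; nlinarith
        have hz2 : g (x / t n) = 0 := by
          apply image_eq_zero_of_notMem_tsupport
          intro hmem
          obtain ⟨hm1, hm2⟩ := hgsupp hmem
          rw [le_div_iff₀ h3] at hm1
          rw [div_le_iff₀ h3] at hm2
          refine hxS ⟨?_, ?_⟩
          · have := mul_nonneg (mul_nonneg ha.le hτ₀.le) h3.le
            rw [hA_def]; nlinarith
          · have := mul_nonneg (mul_nonneg hb0.le hτ₀.le) h3.le
            rw [hB_def]; nlinarith
        rw [hz1, hz2, sub_zero, abs_zero]
    have hIb : ‖∫ x, (((f (x / t n / τ n) : ℝ) : ℂ) * μ.dir x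
        - ((g (x / t n) : ℝ) : ℂ) * μ.dir x) ∂μ.var‖
        ≤ ε' * (μ.var S).toReal := by
      calc ‖∫ x, (((f (x / t n / τ n) : ℝ) : ℂ) * μ.dir x
          - ((g (x / t n) : ℝ) : ℂ) * μ.dir x) ∂μ.var‖
          ≤ ∫ x, (S.indicator fun _ => ε') x ∂μ.var :=
            norm_integral_le_of_norm_le hd_int hptbound
        _ = (μ.var S).toReal • ε' := integral_indicator_const ε' measurableSet_Icc
        _ = ε' * (μ.var S).toReal := by rw [smul_eq_mul]; ring
    have hmassR : (μ.var S).toReal ≤ C * V ρ (t n) :=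
      ENNReal.toReal_le_of_le_ofReal (by positivity) h4
    calc ‖I n - scaledTestInt ρ μ (t n) g‖
        = ‖(V ρ (t n) : ℂ)⁻¹‖ * ‖∫ x, (((f (x / t n / τ n) : ℝ) : ℂ) * μ.dir x
            - ((g (x / t n) : ℝ) : ℂ) * μ.dir x) ∂μ.var‖ := by
          rw [hdiffI, norm_mul]
      _ ≤ (V ρ (t n))⁻¹ * (ε' * (C * V ρ (t n))) := by
          apply mul_le_mul
          · rw [norm_inv, Complex.norm_real, Real.norm_eq_abs, abs_of_pos hVpos]
          · exact le_trans hIb (mul_le_mul_of_nonneg_left hmassR hε'.le)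
          · exact norm_nonneg _
          · positivity
      _ = ε' * C := by field_simp
      _ < ε := by
          have h9 : ε' * (2*(C+1)) = ε := div_mul_cancel₀ ε (by positivity)
          nlinarith
  -- Step 2 : I → ν.testInt g
  have step2 : Tendsto I atTop (nhds (ν.testInt g)) := by
    have := step1.add hνg
    rw [zero_add] at this
    apply this.congr
    intro n
    ring
  -- Step 3 : eventual equality
  have step3 : ∀ᶠ n in atTop, ((V ρ (t n) / V ρ (τ n * t n) : ℝ) : ℂ) * I n
      = scaledTestInt ρ μ (τ n * t n) f := by
    filter_upwards [hτpos, htpos] with n h1 h3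
    have hτn : 0 < τ n := lt_trans (half_pos hτ₀) h1
    have hV1 : (0:ℝ) < V ρ (t n) := Real.rpow_pos_of_pos h3 _
    have hV2 : (0:ℝ) < V ρ (τ n * t n) := Real.rpow_pos_of_pos (mul_pos hτn h3) _
    have hV1c : (V ρ (t n) : ℂ) ≠ 0 := by exact_mod_cast hV1.ne'
    have hV2c : (V ρ (τ n * t n) : ℂ) ≠ 0 := by exact_mod_cast hV2.ne'
    have hintrw : (fun x => ((f (x / (τ n * t n)) : ℝ) : ℂ) * μ.dir x)
        = fun x => ((f (x / t n / τ n) : ℝ) : ℂ) * μ.dir x := by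
      funext x; rw [div_div, mul_comm (t n) (τ n)]
    rw [hI_def]
    simp only [scaledTestInt]
    rw [hintrw]
    rw [Complex.ofReal_div]
    field_simp
  -- Step 4 : ratio tendsto
  have step4 : Tendsto (fun n => ((V ρ (t n) / V ρ (τ n * t n) : ℝ) : ℂ)) atTop
      (nhds ((τ₀ ^ (-l) : ℝ) : ℂ)) :=
    (Complex.continuous_ofReal.tendsto _).comp (lemVratio ρ l h t τ ht τ₀ hτ₀ hτ)
  -- assemble
  have hprod := step4.mul step2
  have hlim : ((τ₀ ^ (-l) : ℝ) : ℂ) * ν.testInt g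
      = ((τ₀ ^ l : ℝ) : ℂ)⁻¹ * ν.testInt (fun x => f (x / τ₀)) := by
    rw [Real.rpow_neg hτ₀.le, Complex.ofReal_inv]
  rw [hlim] at hprod
  exact hprod.congr' step3
end
end

section
/- Let ρ be a proximate order with limit ρ∞ and let μ ∈ 𝔐_∞(ρ) be a (real or complex) Radon measure that is regular in the sense of Azarin, with Fr[μ] = {ν}. Then there exists a complex number c such that dν(r) = c·r^{ρ∞ − 1} dr, i.e. ν is absolutely continuous with density c·r^{ρ∞−1}. -/
open MeasureTheory Filter Topology Set
open scoped ENNReal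

noncomputable section

lemma rho_diff_tendsto (ρ : ℝ → ℝ) (l : ℝ) (h : IsProximateOrder ρ l) {s : ℝ} (hs : 1 ≤ s) :
    Tendsto (fun t => (ρ (s * t) - ρ t) * Real.log t) atTop (𝓝 0) := by
  rw [Metric.tendsto_atTop]
  intro ε hε
  have hspos : (0:ℝ) < s + 1 := by linarith
  set δ := ε / (s + 1) with hδdef
  have hδ : 0 < δ := div_pos hε hspos
  obtain ⟨R₀, hR₀⟩ := Metric.tendsto_atTop.1 h.tendsto_deriv δ hδ
  refine ⟨max R₀ 3, fun t ht => ?_⟩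
  have ht3 : (3:ℝ) ≤ t := le_trans (le_max_right _ _) ht
  have htpos : (0:ℝ) < t := by linarith
  have hlog : (1:ℝ) ≤ Real.log t := by
    rw [Real.le_log_iff_exp_le htpos]
    calc Real.exp 1 ≤ 2.7182818286 := Real.exp_one_lt_d9.le
    _ ≤ t := by linarith
  have hlogpos : 0 < Real.log t := by linarith
  have hstt : t ≤ s * t := le_mul_of_one_le_left htpos.le hs
  have hFTC := (h.locAC t htpos (s*t) hstt).2 (s*t) ⟨hstt, le_rfl⟩
  have htl : 0 < t * Real.log t := mul_pos htpos hlogpos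
  have hbound : ∀ x ∈ Set.uIoc t (s*t), ‖deriv ρ x‖ ≤ δ / (t * Real.log t) := by
    intro x hx
    rw [Set.uIoc_of_le hstt] at hx
    have hxt : t ≤ x := hx.1.le
    have hxpos : 0 < x := lt_of_lt_of_le htpos hxt
    have hxlog : (1:ℝ) ≤ Real.log x := by
      rw [Real.le_log_iff_exp_le hxpos]
      calc Real.exp 1 ≤ 2.7182818286 := Real.exp_one_lt_d9.le
      _ ≤ x := by linarith
    have hxl : 0 < x * Real.log x := mul_pos hxpos (by linarith)
    have h1 : |x| * |Real.log x| * |deriv ρ x| < δ := by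
      have := hR₀ x (le_trans (le_trans (le_max_left _ _) ht) hxt)
      simpa [Real.dist_eq, abs_mul] using this
    have h2 : |deriv ρ x| ≤ δ / (x * Real.log x) := by
      rw [le_div_iff₀ hxl]
      calc |deriv ρ x| * (x * Real.log x) = |x| * |Real.log x| * |deriv ρ x| := by
            rw [abs_of_pos hxpos, abs_of_pos (by linarith : (0:ℝ) < Real.log x)]; ring
      _ ≤ δ := h1.le
    refine le_trans h2 (div_le_div_of_nonneg_left hδ.le htl ?_)
    exact mul_le_mul hxt (Real.log_le_log htpos hxt) hlogpos.le hxpos.le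
  have key : ‖∫ u in t..(s*t), deriv ρ u‖ ≤ (δ / (t * Real.log t)) * |s*t - t| :=
    intervalIntegral.norm_integral_le_of_norm_le_const hbound
  have hdiff : ρ (s*t) - ρ t = ∫ u in t..(s*t), deriv ρ u := by rw [hFTC]; ring
  rw [Real.dist_eq, sub_zero, abs_mul, hdiff]
  have habs : |s*t - t| = (s-1)*t := by
    rw [abs_of_nonneg (by nlinarith)]; ring
  have : ‖∫ u in t..(s*t), deriv ρ u‖ * |Real.log t| ≤ δ * (s - 1) := by
    rw [abs_of_pos hlogpos]
    calc ‖∫ u in t..(s*t), deriv ρ u‖ * Real.log t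
        ≤ (δ / (t * Real.log t)) * |s*t - t| * Real.log t := by
          apply mul_le_mul_of_nonneg_right key hlogpos.le
    _ = δ * (s-1) := by rw [habs]; field_simp
  calc |∫ u in t..(s*t), deriv ρ u| * |Real.log t| ≤ δ * (s-1) := this
  _ < ε := by
      rw [hδdef]
      rw [div_mul_eq_mul_div, div_lt_iff₀ hspos]
      nlinarith

lemma vratio_of_one_le (ρ : ℝ → ℝ) (l : ℝ) (h : IsProximateOrder ρ l) {s : ℝ} (hs : 1 ≤ s) :
    Tendsto (fun t => V ρ (s * t) / V ρ t) atTop (𝓝 (s ^ l)) := by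
  have hs0 : (0:ℝ) < s := lt_of_lt_of_le one_pos hs
  have hst : Tendsto (fun t : ℝ => s * t) atTop atTop :=
    Tendsto.const_mul_atTop hs0 tendsto_id
  have h1 : Tendsto (fun t => ρ (s*t) * Real.log s + (ρ (s*t) - ρ t) * Real.log t)
      atTop (𝓝 (l * Real.log s + 0)) :=
    Tendsto.add ((h.tendsto_lim.comp hst).mul_const _) (rho_diff_tendsto ρ l h hs)
  rw [add_zero] at h1
  have h2 : Tendsto (fun t => Real.exp (ρ (s*t) * Real.log s + (ρ (s*t) - ρ t) * Real.log t))
      atTop (𝓝 (Real.exp (l * Real.log s))) := (Real.continuous_exp.tendsto _).comp h1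
  have heq : s ^ l = Real.exp (l * Real.log s) := by
    rw [Real.rpow_def_of_pos hs0]; ring_nf
  rw [heq]
  refine h2.congr' ?_
  filter_upwards [eventually_ge_atTop (1:ℝ)] with t ht
  have htpos : (0:ℝ) < t := lt_of_lt_of_le one_pos ht
  have hstpos : 0 < s * t := mul_pos hs0 htpos
  have e1 : V ρ (s*t) = Real.exp (ρ (s*t) * Real.log (s*t)) := by
    rw [V, Real.rpow_def_of_pos hstpos]; ring_nf
  have e2 : V ρ t = Real.exp (ρ t * Real.log t) := by
    rw [V, Real.rpow_def_of_pos htpos]; ring_nf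
  rw [e1, e2, ← Real.exp_sub]
  congr 1
  rw [Real.log_mul hs0.ne' htpos.ne']
  ring

lemma vratio_inv (ρ : ℝ → ℝ) (l : ℝ) (h : IsProximateOrder ρ l) {s : ℝ} (hs : 0 < s) :
    Tendsto (fun t => V ρ t / V ρ (s * t)) atTop (𝓝 (s ^ (-l))) := by
  rcases le_or_gt 1 s with h1 | h1
  · have := (vratio_of_one_le ρ l h h1).inv₀ (ne_of_gt (Real.rpow_pos_of_pos hs l))
    rw [← Real.rpow_neg hs.le] at this
    refine this.congr fun t => ?_
    rw [inv_div]
  · have hs' : 1 ≤ s⁻¹ := by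
      rw [le_inv_comm₀ one_pos hs]; simpa using h1.le
    have hst : Tendsto (fun t : ℝ => s * t) atTop atTop :=
      Tendsto.const_mul_atTop hs tendsto_id
    have := (vratio_of_one_le ρ l h hs').comp hst
    have heq : s⁻¹ ^ l = s ^ (-l) := by
      rw [Real.inv_rpow hs.le, Real.rpow_neg hs.le]
    rw [heq] at this
    refine this.congr fun t => ?_
    simp only [Function.comp_apply]
    congr 2
    field_simp

lemma RadonC.intOn (ν : RadonC) {g : ℝ → ℝ} (hg : Measurable g)
    (hb : ∀ᵐ x ∂ν.var, |g x| ≤ 1) {A : Set ℝ} {p q : ℝ} (hp : 0 < p)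
    (hA : A ⊆ Set.Icc p q) : IntegrableOn g A ν.var := by
  have hIcc : IntegrableOn g (Set.Icc p q) ν.var := by
    refine Integrable.mono' (g := fun _ => (1:ℝ)) ?_ hg.aestronglyMeasurable.restrict ?_
    · exact integrableOn_const (C := (1:ℝ)) (ν.locFin p q hp).ne
    · exact ae_restrict_of_ae (hb.mono fun x hx => by simpa [Real.norm_eq_abs] using hx)
  exact hIcc.mono_set hA

lemma RadonC.intOnDir (ν : RadonC) {A : Set ℝ} {p q : ℝ} (hp : 0 < p)
    (hA : A ⊆ Set.Icc p q) : IntegrableOn ν.dir A ν.var := by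
  have hIcc : IntegrableOn ν.dir (Set.Icc p q) ν.var := by
    refine Integrable.mono' (g := fun _ => (1:ℝ)) ?_
      ν.measurable_dir.aestronglyMeasurable.restrict ?_
    · exact integrableOn_const (C := (1:ℝ)) (ν.locFin p q hp).ne
    · exact ae_restrict_of_ae (ν.unimodular.mono fun x hx => by
        simp [hx])
  exact hIcc.mono_set hA

lemma RadonC.norm_set_le (ν : RadonC) (S : Set ℝ) : ‖ν.set S‖ ≤ (ν.var S).toReal := by
  refine le_trans (norm_integral_le_integral_norm _) ?_
  have h1 : ∫ x in S, ‖ν.dir x‖ ∂ν.var = ∫ _x in S, (1:ℝ) ∂ν.var := by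
    refine integral_congr_ae (ae_restrict_of_ae (ν.unimodular.mono fun x hx => ?_))
    simp [hx]
  rw [h1, setIntegral_const, smul_eq_mul, mul_one]; exact le_rfl

lemma isTest_comp_div {f : ℝ → ℝ} (hf : IsTest f) {s : ℝ} (hs : 0 < s) :
    IsTest (fun x => f (x / s)) := by
  obtain ⟨hc, hcs, hsupp⟩ := hf
  have hφ : (fun x : ℝ => f (x / s)) = f ∘ (Homeomorph.mulRight₀ s⁻¹ (inv_ne_zero hs.ne')) := by
    funext x; simp [div_eq_mul_inv]
  refine ⟨hc.comp (continuous_id.div_const s), ?_, ?_⟩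
  · rw [hφ]; exact hcs.comp_homeomorph _
  · rw [hφ]
    set φ := Homeomorph.mulRight₀ s⁻¹ (inv_ne_zero hs.ne') with hφdef
    have h0 : Function.support (f ∘ ⇑φ) ⊆ ⇑φ ⁻¹' tsupport f := by
      rw [Function.support_comp_eq_preimage]
      exact Set.preimage_mono (subset_tsupport f)
    have h1 : tsupport (f ∘ ⇑φ) ⊆ ⇑φ ⁻¹' tsupport f :=
      closure_minimal h0 ((isClosed_tsupport f).preimage φ.continuous)
    refine h1.trans ?_
    intro x hx
    have hx' : (x * s⁻¹) ∈ Set.Ioi (0:ℝ) := hsupp hx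
    have : 0 < x * s⁻¹ := hx'
    have : 0 < x := by
      by_contra hle
      push_neg at hle
      nlinarith [inv_pos.2 hs]
    exact this

lemma scaling_eq (ρ : ℝ → ℝ) (l : ℝ) (h : IsProximateOrder ρ l) (μ : RadonC)
    (ν : RadonC) (hν : ν ∈ AzarinSet ρ μ)
    (hreg : ∀ σ ∈ AzarinSet ρ μ, WideEq σ ν)
    {s : ℝ} (hs : 0 < s) (f : ℝ → ℝ) (hf : IsTest f) :
    ((s ^ (-l) : ℝ) : ℂ) * ν.testInt (fun x => f (x / s)) = ν.testInt f := by
  obtain ⟨t, ht, hwt⟩ := hν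
  have hxs : ∀ x : ℝ, s * (x / s) = x := fun x => by field_simp
  have hφm : Measurable (fun x : ℝ => x / s) := measurable_id.div_const s
  have hdirm : Measurable (fun y : ℝ => ν.dir (s * y)) :=
    ν.measurable_dir.comp (measurable_const_mul s)
  let σ : RadonC :=
  { var := ENNReal.ofReal (s ^ (-l)) • Measure.map (fun x : ℝ => x / s) ν.var
    dir := fun y => ν.dir (s * y)
    measurable_dir := hdirm
    unimodular := by
      apply Measure.ae_smul_measure
      have hset : MeasurableSet {y : ℝ | ‖ν.dir (s * y)‖ = 1} := by
        have : {y : ℝ | ‖ν.dir (s * y)‖ = 1}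
            = (fun y => ‖ν.dir (s * y)‖) ⁻¹' {1} := rfl
        rw [this]
        exact (continuous_norm.measurable.comp hdirm) (measurableSet_singleton 1)
      rw [MeasureTheory.ae_map_iff hφm.aemeasurable hset]
      simpa only [hxs] using ν.unimodular
    locFin := by
      intro a b ha
      rw [Measure.smul_apply, smul_eq_mul, Measure.map_apply hφm measurableSet_Icc]
      have hpre : (fun x : ℝ => x / s) ⁻¹' Set.Icc a b = Set.Icc (a*s) (b*s) := by
        ext x
        simp only [Set.mem_preimage, Set.mem_Icc]
        rw [le_div_iff₀ hs, div_le_iff₀ hs]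
      rw [hpre]
      exact ENNReal.mul_lt_top ENNReal.ofReal_lt_top (ν.locFin _ _ (mul_pos ha hs))
    conc := by
      rw [Measure.smul_apply, smul_eq_mul, Measure.map_apply hφm measurableSet_Iic]
      have hpre : (fun x : ℝ => x / s) ⁻¹' Set.Iic 0 = Set.Iic 0 := by
        ext x
        simp only [Set.mem_preimage, Set.mem_Iic]
        rw [div_le_iff₀ hs, zero_mul]
      rw [hpre, ν.conc, mul_zero] }
  have htestσ : ∀ g : ℝ → ℝ, Continuous g →
      σ.testInt g = ((s ^ (-l) : ℝ) : ℂ) * ∫ x, (g (x / s) : ℂ) * ν.dir x ∂ν.var := by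
    intro g hg
    show (∫ y, (g y : ℂ) * ν.dir (s * y)
        ∂(ENNReal.ofReal (s ^ (-l)) • Measure.map (fun x : ℝ => x / s) ν.var)) = _
    rw [integral_smul_measure]
    have hsm : AEStronglyMeasurable (fun y : ℝ => (g y : ℂ) * ν.dir (s * y))
        (Measure.map (fun x : ℝ => x / s) ν.var) :=
      ((Complex.continuous_ofReal.comp hg).measurable.mul hdirm).aestronglyMeasurable
    rw [integral_map hφm.aemeasurable hsm]
    simp only [hxs]
    rw [ENNReal.toReal_ofReal (Real.rpow_nonneg hs.le _), Complex.real_smul]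
  have hσmem : σ ∈ AzarinSet ρ μ := by
    refine ⟨fun n => s * t n, Tendsto.const_mul_atTop hs ht, ?_⟩
    intro g hg
    have hgt : IsTest (fun x => g (x / s)) := isTest_comp_div hg hs
    have hlim : Tendsto (fun n => ((V ρ (t n) / V ρ (s * t n) : ℝ) : ℂ)
          * scaledTestInt ρ μ (t n) (fun x => g (x / s))) atTop
        (𝓝 (((s ^ (-l) : ℝ) : ℂ) * ν.testInt (fun x => g (x / s)))) := by
      exact Tendsto.mul ((Complex.continuous_ofReal.tendsto _).comp
        ((vratio_inv ρ l h hs).comp ht)) (hwt _ hgt)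
    have hval : σ.testInt g = ((s ^ (-l) : ℝ) : ℂ) * ν.testInt (fun x => g (x / s)) :=
      htestσ g hg.1
    rw [hval]
    refine hlim.congr' ?_
    filter_upwards [ht.eventually_ge_atTop 1] with n hn
    have ht0 : (0:ℝ) < t n := lt_of_lt_of_le one_pos hn
    have hst0 : 0 < s * t n := mul_pos hs ht0
    have hV1 : (V ρ (t n) : ℂ) ≠ 0 :=
      Complex.ofReal_ne_zero.2 (Real.rpow_pos_of_pos ht0 _).ne'
    have hV2 : (V ρ (s * t n) : ℂ) ≠ 0 :=
      Complex.ofReal_ne_zero.2 (Real.rpow_pos_of_pos hst0 _).ne'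
    show ((V ρ (t n) / V ρ (s * t n) : ℝ) : ℂ) * scaledTestInt ρ μ (t n) (fun x => g (x / s))
        = scaledTestInt ρ μ (s * t n) g
    unfold scaledTestInt
    have hfun : ∀ x : ℝ, x / t n / s = x / (s * t n) := by
      intro x; rw [div_div, mul_comm]
    simp only [hfun]
    rw [← mul_assoc]
    congr 1
    push_cast
    field_simp
  have hWE := hreg σ hσmem f hf
  rw [htestσ f hf.1] at hWE
  exact hWE

def approxIoc (u v : ℝ) (n : ℕ) (x : ℝ) : ℝ :=
  max 0 (min 1 (min ((n+1 : ℝ) * (x - u)) (1 - (n+1 : ℝ) * (x - v))))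

lemma approxIoc_cont (u v : ℝ) (n : ℕ) : Continuous (approxIoc u v n) := by
  unfold approxIoc
  fun_prop

lemma approxIoc_nonneg (u v : ℝ) (n : ℕ) (x : ℝ) : 0 ≤ approxIoc u v n x := le_max_left _ _

lemma approxIoc_le_one (u v : ℝ) (n : ℕ) (x : ℝ) : approxIoc u v n x ≤ 1 :=
  max_le zero_le_one (min_le_left _ _)

lemma approxIoc_supp {u v : ℝ} {n : ℕ} {x : ℝ} (hx : approxIoc u v n x ≠ 0) :
    x ∈ Set.Icc u (v + 1) := by
  by_contra hmem
  rw [Set.mem_Icc] at hmem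
  push_neg at hmem
  apply hx
  rcases le_or_gt u x with h1 | h1
  · have h2 : v + 1 < x := hmem h1
    have : 1 - (n+1 : ℝ) * (x - v) ≤ 0 := by
      have hn1 : (1:ℝ) ≤ (n+1 : ℝ) := by have := Nat.cast_nonneg (α := ℝ) n; linarith
      nlinarith
    unfold approxIoc
    rw [max_eq_left]
    exact le_trans (min_le_right _ _) (le_trans (min_le_right _ _) this)
  · have : (n+1 : ℝ) * (x - u) ≤ 0 := by nlinarith [Nat.cast_nonneg (α := ℝ) n]
    unfold approxIoc
    rw [max_eq_left]
    exact le_trans (min_le_right _ _) (le_trans (min_le_left _ _) this)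

lemma approxIoc_isTest {u v : ℝ} (hu : 0 < u) (n : ℕ) : IsTest (approxIoc u v n) := by
  refine ⟨approxIoc_cont u v n, ?_, ?_⟩
  · have hsub : tsupport (approxIoc u v n) ⊆ Set.Icc u (v+1) :=
      closure_minimal (fun x hx => approxIoc_supp hx) isClosed_Icc
    exact IsCompact.of_isClosed_subset isCompact_Icc (isClosed_tsupport _) hsub
  · refine (closure_minimal (fun x hx => approxIoc_supp hx) isClosed_Icc).trans ?_
    intro x hx
    exact lt_of_lt_of_le hu hx.1

lemma approxIoc_tendsto (u v x : ℝ) :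
    Tendsto (fun n => approxIoc u v n x) atTop
      (𝓝 (Set.indicator (Set.Ioc u v) (fun _ => (1:ℝ)) x)) := by
  rcases le_or_gt x u with h1 | h1
  · have : ∀ n : ℕ, approxIoc u v n x = 0 := by
      intro n
      unfold approxIoc
      rw [max_eq_left]
      refine le_trans (min_le_right _ _) (le_trans (min_le_left _ _) ?_)
      nlinarith [Nat.cast_nonneg (α := ℝ) n]
    rw [Set.indicator_of_notMem (by simp [Set.mem_Ioc]; intro h; linarith)]
    simp only [this]
    exact tendsto_const_nhds
  rcases le_or_gt x v with h2 | h2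
  · -- x ∈ Ioc u v : eventually 1
    rw [Set.indicator_of_mem (Set.mem_Ioc.2 ⟨h1, h2⟩)]
    obtain ⟨N, hN⟩ := exists_nat_ge (1 / (x - u))
    refine Tendsto.congr' ?_ (tendsto_const_nhds : Tendsto (fun _ : ℕ => (1:ℝ)) atTop (𝓝 1))
    filter_upwards [eventually_ge_atTop N] with n hn
    have hxu : 0 < x - u := by linarith
    have hN' : 1 / (x - u) ≤ (n+1 : ℝ) := by
      calc (1:ℝ) / (x - u) ≤ (N:ℝ) := hN
      _ ≤ (n:ℝ) := by exact_mod_cast hn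
      _ ≤ (n+1 : ℝ) := by linarith
    have h3 : (1:ℝ) ≤ (n+1 : ℝ) * (x - u) := by
      rw [div_le_iff₀ hxu] at hN'
      linarith
    have h4 : (1:ℝ) ≤ 1 - (n+1 : ℝ) * (x - v) := by
      nlinarith [Nat.cast_nonneg (α := ℝ) n]
    symm
    unfold approxIoc
    rw [min_eq_left (le_min h3 h4), max_eq_right zero_le_one]
  · -- x > v : eventually 0
    rw [Set.indicator_of_notMem (by simp [Set.mem_Ioc]; intro h; linarith)]
    obtain ⟨N, hN⟩ := exists_nat_ge (1 / (x - v))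
    refine Tendsto.congr' ?_ (tendsto_const_nhds : Tendsto (fun _ : ℕ => (0:ℝ)) atTop (𝓝 0))
    filter_upwards [eventually_ge_atTop N] with n hn
    have hxv : 0 < x - v := by linarith
    have hN' : 1 / (x - v) ≤ (n+1 : ℝ) := by
      calc (1:ℝ) / (x - v) ≤ (N:ℝ) := hN
      _ ≤ (n:ℝ) := by exact_mod_cast hn
      _ ≤ (n+1 : ℝ) := by linarith
    have h3 : (1:ℝ) ≤ (n+1 : ℝ) * (x - v) := by
      rw [div_le_iff₀ hxv] at hN'
      linarith
    symm
    unfold approxIoc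
    rw [max_eq_left]
    refine le_trans (min_le_right _ _) (le_trans (min_le_right _ _) ?_)
    linarith

lemma tendsto_testInt (ν : RadonC) {p q u v : ℝ} (hp : 0 < p) (g : ℕ → ℝ → ℝ)
    (hg : ∀ n, Continuous (g n)) (hb : ∀ n x, g n x ≠ 0 → x ∈ Set.Icc p q)
    (hb1 : ∀ n x, |g n x| ≤ 1)
    (hconv : ∀ x, Tendsto (fun n => g n x) atTop
      (𝓝 (Set.indicator (Set.Ioc u v) (fun _ => (1:ℝ)) x))) :
    Tendsto (fun n => ∫ x, ((g n x : ℝ) : ℂ) * ν.dir x ∂ν.var) atTop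
      (𝓝 (ν.set (Set.Ioc u v))) := by
  have hlim_eq : ν.set (Set.Ioc u v)
      = ∫ x, ((Set.indicator (Set.Ioc u v) (fun _ => (1:ℝ)) x : ℝ) : ℂ) * ν.dir x ∂ν.var := by
    rw [RadonC.set, ← integral_indicator measurableSet_Ioc]
    congr 1
    funext x
    by_cases hx : x ∈ Set.Ioc u v
    · simp [Set.indicator_of_mem hx]
    · simp [Set.indicator_of_notMem hx]
  rw [hlim_eq]
  refine tendsto_integral_of_dominated_convergence
    (Set.indicator (Set.Icc p q) (fun _ => (1:ℝ))) ?_ ?_ ?_ ?_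
  · intro n
    exact ((Complex.continuous_ofReal.comp (hg n)).measurable.mul
      ν.measurable_dir).aestronglyMeasurable
  · rw [integrable_indicator_iff measurableSet_Icc]
    exact integrableOn_const (C := (1:ℝ)) (ν.locFin p q hp).ne
  · intro n
    refine ν.unimodular.mono fun x hx => ?_
    rw [norm_mul, hx, mul_one, Complex.norm_real,
      Real.norm_eq_abs]
    by_cases hmem : x ∈ Set.Icc p q
    · rw [Set.indicator_of_mem hmem]; exact hb1 n x
    · rw [Set.indicator_of_notMem hmem]
      by_cases hzero : g n x = 0
      · simp [hzero]
      · exact absurd (hb n x hzero) hmem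
  · refine Filter.Eventually.of_forall fun x => ?_
    exact Tendsto.mul_const _ ((Complex.continuous_ofReal.tendsto _).comp (hconv x))

lemma scale_Ioc (ρ : ℝ → ℝ) (l : ℝ) (h : IsProximateOrder ρ l) (μ : RadonC)
    (ν : RadonC) (hν : ν ∈ AzarinSet ρ μ)
    (hreg : ∀ σ ∈ AzarinSet ρ μ, WideEq σ ν)
    {s u : ℝ} (hs : 0 < s) (hu : 0 < u) (v : ℝ) :
    ν.set (Set.Ioc (s * u) (s * v)) = ((s ^ l : ℝ) : ℂ) * ν.set (Set.Ioc u v) := by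
  have hlim1 : Tendsto (fun n => ν.testInt (approxIoc u v n)) atTop
      (𝓝 (ν.set (Set.Ioc u v))) := by
    refine tendsto_testInt ν hu (approxIoc u v) (approxIoc_cont u v)
      (fun n x hx => approxIoc_supp hx) ?_ (approxIoc_tendsto u v)
    intro n x
    rw [abs_of_nonneg (approxIoc_nonneg u v n x)]
    exact approxIoc_le_one u v n x
  have hlim2 : Tendsto (fun n => ν.testInt (fun x => approxIoc u v n (x / s))) atTop
      (𝓝 (ν.set (Set.Ioc (s*u) (s*v)))) := by
    refine tendsto_testInt ν (p := s*u) (q := s*(v+1)) (mul_pos hs hu)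
      (fun n x => approxIoc u v n (x / s))
      (fun n => (approxIoc_cont u v n).comp (continuous_id.div_const s)) ?_ ?_ ?_
    · intro n x hx
      have := approxIoc_supp hx
      rw [Set.mem_Icc] at this ⊢
      constructor
      · calc s * u = u * s := mul_comm _ _
        _ ≤ (x / s) * s := mul_le_mul_of_nonneg_right this.1 hs.le
        _ = x := by field_simp
      · calc x = (x / s) * s := by field_simp
        _ ≤ (v+1) * s := mul_le_mul_of_nonneg_right this.2 hs.le
        _ = s * (v+1) := mul_comm _ _
    · intro n x
      rw [abs_of_nonneg (approxIoc_nonneg u v n _)]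
      exact approxIoc_le_one u v n _
    · intro x
      have := approxIoc_tendsto u v (x / s)
      have hiff : x / s ∈ Set.Ioc u v ↔ x ∈ Set.Ioc (s*u) (s*v) := by
        simp only [Set.mem_Ioc]
        rw [lt_div_iff₀ hs, div_le_iff₀ hs, mul_comm u s, mul_comm v s]
      have hind : Set.indicator (Set.Ioc u v) (fun _ => (1:ℝ)) (x / s)
          = Set.indicator (Set.Ioc (s*u) (s*v)) (fun _ => (1:ℝ)) x := by
        by_cases hmem : x / s ∈ Set.Ioc u v
        · rw [Set.indicator_of_mem hmem, Set.indicator_of_mem (hiff.1 hmem)]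
        · rw [Set.indicator_of_notMem hmem,
            Set.indicator_of_notMem (fun hc => hmem (hiff.2 hc))]
      rw [← hind]
      exact this
  have heach : ∀ n : ℕ, ((s ^ (-l) : ℝ) : ℂ) * ν.testInt (fun x => approxIoc u v n (x / s))
      = ν.testInt (approxIoc u v n) := fun n =>
    scaling_eq ρ l h μ ν hν hreg hs (approxIoc u v n) (approxIoc_isTest hu n)
  have hlim3 : Tendsto (fun n => ((s ^ (-l) : ℝ) : ℂ)
      * ν.testInt (fun x => approxIoc u v n (x / s))) atTop
      (𝓝 (((s ^ (-l) : ℝ) : ℂ) * ν.set (Set.Ioc (s*u) (s*v)))) := hlim2.const_mul _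
  have hkey : ((s ^ (-l) : ℝ) : ℂ) * ν.set (Set.Ioc (s*u) (s*v)) = ν.set (Set.Ioc u v) := by
    refine tendsto_nhds_unique ?_ hlim1
    refine hlim3.congr fun n => heach n
  have hcancel : ((s ^ l : ℝ) : ℂ) * ((s ^ (-l) : ℝ) : ℂ) = 1 := by
    rw [← Complex.ofReal_mul, ← Real.rpow_add hs, add_neg_cancel, Real.rpow_zero,
      Complex.ofReal_one]
  calc ν.set (Set.Ioc (s*u) (s*v))
      = (((s ^ l : ℝ) : ℂ) * ((s ^ (-l) : ℝ) : ℂ)) * ν.set (Set.Ioc (s*u) (s*v)) := by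
        rw [hcancel, one_mul]
  _ = ((s ^ l : ℝ) : ℂ) * ν.set (Set.Ioc u v) := by rw [mul_assoc, hkey]

lemma RadonC.set_Ioc_add (ν : RadonC) {u v w : ℝ} (hu : 0 < u) (huv : u ≤ v) (hvw : v ≤ w) :
    ν.set (Set.Ioc u w) = ν.set (Set.Ioc u v) + ν.set (Set.Ioc v w) := by
  rw [RadonC.set, RadonC.set, RadonC.set, ← Set.Ioc_union_Ioc_eq_Ioc huv hvw,
    setIntegral_union (Set.Ioc_disjoint_Ioc_of_le le_rfl) measurableSet_Ioc
      (ν.intOnDir hu Set.Ioc_subset_Icc_self)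
      (ν.intOnDir (hu.trans_le huv) Set.Ioc_subset_Icc_self)]

def psiF (ν : RadonC) (x : ℝ) : ℂ :=
  if 0 ≤ x then ν.set (Set.Ioc 1 (Real.exp x)) else - ν.set (Set.Ioc (Real.exp x) 1)

lemma psiF_zero (ν : RadonC) : psiF ν 0 = 0 := by
  rw [psiF, if_pos le_rfl, Real.exp_zero, Set.Ioc_self, RadonC.set,
    Measure.restrict_empty, integral_zero_measure]

lemma psiF_sub (ν : RadonC) {x y : ℝ} (hxy : x ≤ y) :
    psiF ν y - psiF ν x = ν.set (Set.Ioc (Real.exp x) (Real.exp y)) := by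
  have hex : (0:ℝ) < Real.exp x := Real.exp_pos x
  have hee : Real.exp x ≤ Real.exp y := Real.exp_le_exp.2 hxy
  have hle1 : ∀ z : ℝ, z ≤ 0 → Real.exp z ≤ 1 := by
    intro z hz
    rw [← Real.exp_zero]
    exact Real.exp_le_exp.2 hz
  rcases le_or_gt 0 x with hx | hx
  · have hy : 0 ≤ y := le_trans hx hxy
    rw [psiF, psiF, if_pos hx, if_pos hy]
    rw [ν.set_Ioc_add one_pos (Real.one_le_exp hx) hee]
    ring
  rcases le_or_gt 0 y with hy | hy
  · rw [psiF, psiF, if_pos hy, if_neg (not_le.2 hx)]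
    rw [ν.set_Ioc_add hex (hle1 x hx.le) (Real.one_le_exp hy)]
    ring
  · rw [psiF, psiF, if_neg (not_le.2 hx), if_neg (not_le.2 hy)]
    rw [ν.set_Ioc_add hex hee (hle1 y hy.le)]
    ring

lemma psiF_FE (ν : RadonC) (l : ℝ)
    (hscale : ∀ {s u : ℝ}, 0 < s → 0 < u → ∀ v,
      ν.set (Set.Ioc (s*u) (s*v)) = ((s ^ l : ℝ) : ℂ) * ν.set (Set.Ioc u v))
    (a b : ℝ) :
    psiF ν (a+b) = psiF ν a + ((Real.exp (l*a) : ℝ) : ℂ) * psiF ν b := by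
  have hEa : Real.exp a ^ l = Real.exp (l * a) := by
    rw [Real.rpow_def_of_pos (Real.exp_pos a), Real.log_exp]; ring_nf
  rcases le_or_gt 0 b with hb | hb
  · have h1 := psiF_sub ν (le_add_of_nonneg_right hb : a ≤ a + b)
    have h2 : ν.set (Set.Ioc (Real.exp a) (Real.exp (a+b)))
        = ((Real.exp (l*a) : ℝ) : ℂ) * ν.set (Set.Ioc 1 (Real.exp b)) := by
      have := hscale (Real.exp_pos a) one_pos (Real.exp b)
      rw [mul_one, ← Real.exp_add, hEa] at this
      exact this
    have h3 : psiF ν b = ν.set (Set.Ioc 1 (Real.exp b)) := by rw [psiF, if_pos hb]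
    rw [h3, ← h2, ← h1]; ring
  · have h1 := psiF_sub ν (by linarith : a + b ≤ a)
    have h2 : ν.set (Set.Ioc (Real.exp (a+b)) (Real.exp a))
        = ((Real.exp (l*a) : ℝ) : ℂ) * ν.set (Set.Ioc (Real.exp b) 1) := by
      have := hscale (Real.exp_pos a) (Real.exp_pos b) 1
      rw [mul_one, ← Real.exp_add, hEa] at this
      exact this
    have h3 : psiF ν b = - ν.set (Set.Ioc (Real.exp b) 1) := by
      rw [psiF, if_neg (not_le.2 hb)]
    rw [h2] at h1
    rw [h3]
    linear_combination -h1

lemma psiF_rightcont (ν : RadonC) : Tendsto (psiF ν) (𝓝[≥] (0:ℝ)) (𝓝 0) := by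
  rw [Metric.tendsto_nhdsWithin_nhds]
  intro ε hε
  -- find n with ν.var (Ioc 1 (exp (1/(n+1)))) < ofReal ε
  have hmeas0 : Tendsto (fun n : ℕ => ν.var (Set.Ioc 1 (Real.exp (1/(n+1:ℝ))))) atTop
      (𝓝 (ν.var (⋂ n : ℕ, Set.Ioc 1 (Real.exp (1/(n+1:ℝ)))))) := by
    refine MeasureTheory.tendsto_measure_iInter_atTop
      (fun n => measurableSet_Ioc.nullMeasurableSet) ?_ ?_
    · intro m n hmn
      refine Set.Ioc_subset_Ioc_right (Real.exp_le_exp.2 ?_)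
      have h1 : (0:ℝ) < m + 1 := by positivity
      have h2 : (m:ℝ) + 1 ≤ (n:ℝ) + 1 := by
        have : (m:ℝ) ≤ n := by exact_mod_cast hmn
        linarith
      exact one_div_le_one_div_of_le h1 h2
    · refine ⟨0, ?_⟩
      refine ne_of_lt (lt_of_le_of_lt (measure_mono Set.Ioc_subset_Icc_self) ?_)
      exact ν.locFin _ _ one_pos
  have hInter : (⋂ n : ℕ, Set.Ioc 1 (Real.exp (1/(n+1:ℝ)))) = (∅ : Set ℝ) := by
    ext x
    simp only [Set.mem_iInter, Set.mem_Ioc, Set.mem_empty_iff_false, iff_false, not_forall]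
    by_contra hall
    push_neg at hall
    have hx1 : 1 < x := (hall 0).1
    have htend : Tendsto (fun n : ℕ => Real.exp (1/(n+1:ℝ))) atTop (𝓝 1) := by
      have := (Real.continuous_exp.tendsto 0).comp tendsto_one_div_add_atTop_nhds_zero_nat
      simpa [Real.exp_zero, Function.comp_def] using this
    have : x ≤ 1 := ge_of_tendsto' htend fun n => (hall n).2
    linarith
  rw [hInter, measure_empty] at hmeas0
  have hev : ∀ᶠ n : ℕ in atTop, ν.var (Set.Ioc 1 (Real.exp (1/(n+1:ℝ)))) < ENNReal.ofReal ε :=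
    hmeas0.eventually_lt_const (by simpa using hε)
  obtain ⟨n, hn⟩ := hev.exists
  refine ⟨1/(n+1:ℝ), by positivity, ?_⟩
  intro x hx hdist
  rw [Set.mem_Ici] at hx
  rw [Real.dist_eq, sub_zero, abs_of_nonneg hx] at hdist
  rw [dist_zero_right]
  have hψ : psiF ν x = ν.set (Set.Ioc 1 (Real.exp x)) := by rw [psiF, if_pos hx]
  rw [hψ]
  refine lt_of_le_of_lt (ν.norm_set_le _) ?_
  have hsub : ν.var (Set.Ioc 1 (Real.exp x)) ≤ ν.var (Set.Ioc 1 (Real.exp (1/(n+1:ℝ)))) :=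
    measure_mono (Set.Ioc_subset_Ioc_right (Real.exp_le_exp.2 hdist.le))
  have hlt : ν.var (Set.Ioc 1 (Real.exp x)) < ENNReal.ofReal ε := lt_of_le_of_lt hsub hn
  exact (ENNReal.lt_ofReal_iff_toReal_lt (ne_top_of_lt hlt)).1 hlt

lemma exists_c (ρ : ℝ → ℝ) (l : ℝ) (h : IsProximateOrder ρ l) (μ : RadonC)
    (ν : RadonC) (hν : ν ∈ AzarinSet ρ μ)
    (hreg : ∀ σ ∈ AzarinSet ρ μ, WideEq σ ν) :
    ∃ c : ℂ, ∀ u v : ℝ, 0 < u →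
      ν.set (Set.Ioc u v) = c * ((∫ r in Set.Ioc u v, r ^ (l-1) ∂(volume : Measure ℝ) : ℝ) : ℂ) := by
  have hscale : ∀ {s u : ℝ}, 0 < s → 0 < u → ∀ v,
      ν.set (Set.Ioc (s*u) (s*v)) = ((s ^ l : ℝ) : ℂ) * ν.set (Set.Ioc u v) :=
    fun hs hu v => scale_Ioc ρ l h μ ν hν hreg hs hu v
  have hFE := psiF_FE ν l hscale
  have hempty : ∀ u v : ℝ, v ≤ u →
      ν.set (Set.Ioc u v) = 0 ∧ (∫ r in Set.Ioc u v, r ^ (l-1) ∂(volume : Measure ℝ)) = 0 := by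
    intro u v huv
    rw [Set.Ioc_eq_empty (not_lt.2 huv)]
    constructor
    · rw [RadonC.set, Measure.restrict_empty, integral_zero_measure]
    · rw [Measure.restrict_empty, integral_zero_measure]
  have hrepr : ∀ u v : ℝ, 0 < u → u < v →
      ν.set (Set.Ioc u v) = psiF ν (Real.log v) - psiF ν (Real.log u) := by
    intro u v hu huv
    have hv : 0 < v := hu.trans huv
    have := psiF_sub ν (Real.log_le_log hu huv.le)
    rw [Real.exp_log hu, Real.exp_log hv] at this
    exact this.symm
  rcases eq_or_ne l 0 with hl | hl
  · -- l = 0 : psiF is additive, hence linear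
    subst hl
    have hadd : ∀ a b : ℝ, psiF ν (a + b) = psiF ν a + psiF ν b := by
      intro a b
      have := hFE a b
      simpa [Real.exp_zero] using this
    have hneg : ∀ a : ℝ, psiF ν (-a) = - psiF ν a := by
      intro a
      have h1 := hadd a (-a)
      rw [add_neg_cancel, psiF_zero] at h1
      linear_combination -h1
    have hcont0 : Tendsto (psiF ν) (𝓝 (0:ℝ)) (𝓝 0) := by
      rw [← nhdsLE_sup_nhdsGE (0:ℝ), tendsto_sup]
      constructor
      · have hmap : Tendsto (fun x : ℝ => -x) (𝓝[≤] (0:ℝ)) (𝓝[≥] (0:ℝ)) := by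
          refine tendsto_nhdsWithin_of_tendsto_nhds_of_eventually_within _ ?_ ?_
          · have h2 : Tendsto (fun x : ℝ => -x) (𝓝 (0:ℝ)) (𝓝 (0:ℝ)) := by
              simpa using (continuous_neg.tendsto (0:ℝ))
            exact h2.mono_left nhdsWithin_le_nhds
          · filter_upwards [self_mem_nhdsWithin] with x hx
            simp only [Set.mem_Iic] at hx
            simp only [Set.mem_Ici]
            linarith
        have h3 := ((psiF_rightcont ν).comp hmap).neg
        rw [neg_zero] at h3
        refine h3.congr fun x => ?_
        simp only [Function.comp_apply]
        rw [hneg x, neg_neg]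
      · exact psiF_rightcont ν
    have hcont : Continuous (psiF ν) := by
      rw [continuous_iff_continuousAt]
      intro a
      have heq : psiF ν = fun y => psiF ν a + psiF ν (y - a) := by
        funext y
        have h1 := hadd a (y - a)
        rw [add_sub_cancel] at h1
        rw [h1]
      rw [ContinuousAt, heq]
      have h2 : Tendsto (fun y : ℝ => y - a) (𝓝 a) (𝓝 0) := by
        have := (continuous_id.sub (continuous_const (y := a))).tendsto a
        simpa [Pi.sub_def] using this
      have h3 := (hcont0.comp h2).const_add (psiF ν a)
      simpa [psiF_zero] using h3
    let L := AddMonoidHom.toRealLinearMap (AddMonoidHom.mk' (psiF ν) hadd) hcont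
    have hlin : ∀ x : ℝ, psiF ν x = (x:ℂ) * psiF ν 1 := by
      intro x
      have h1 : psiF ν x = L x := rfl
      have h2 : L x = x • L 1 := by
        have := L.map_smul x (1:ℝ)
        rwa [smul_eq_mul, mul_one] at this
      have h4 : L 1 = psiF ν 1 := rfl
      rw [h1, h2, h4, Complex.real_smul]
    refine ⟨psiF ν 1, ?_⟩
    intro u v hu
    rcases lt_or_ge u v with huv | huv
    · have hv : 0 < v := hu.trans huv
      rw [hrepr u v hu huv, hlin (Real.log v), hlin (Real.log u)]
      have hIval : (∫ r in Set.Ioc u v, r ^ ((0:ℝ)-1) ∂(volume : Measure ℝ))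
          = Real.log v - Real.log u := by
        rw [← intervalIntegral.integral_of_le huv.le]
        have hfun : ∀ r : ℝ, r ^ ((0:ℝ)-1) = r⁻¹ := by
          intro r; rw [zero_sub, Real.rpow_neg_one]
        rw [intervalIntegral.integral_congr (g := fun r => r⁻¹) (fun r _ => hfun r)]
        rw [integral_inv_of_pos hu hv, Real.log_div hv.ne' hu.ne']
      rw [hIval]
      push_cast
      ring
    · obtain ⟨h1, h2⟩ := hempty u v huv
      rw [h1, h2]
      simp
  · -- l ≠ 0
    set E : ℝ → ℂ := fun a => ((Real.exp (l*a) : ℝ) : ℂ) with hE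
    have hsymm : ∀ a b : ℝ, psiF ν a + E a * psiF ν b = psiF ν b + E b * psiF ν a := by
      intro a b
      have h1 := hFE a b
      have h2 := hFE b a
      rw [add_comm b a] at h2
      rw [← h1, ← h2]
    have hE1 : E 1 ≠ 1 := by
      simp only [hE]
      rw [Ne, Complex.ofReal_eq_one, mul_one, Real.exp_eq_one_iff]
      exact hl
    have hE1' : (1:ℂ) - E 1 ≠ 0 := sub_ne_zero.2 (Ne.symm hE1)
    have hpsieq : ∀ a : ℝ, psiF ν a = psiF ν 1 / (1 - E 1) * (1 - E a) := by
      intro a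
      rw [div_mul_eq_mul_div, eq_div_iff hE1']
      linear_combination hsymm a 1
    refine ⟨- (psiF ν 1 / (1 - E 1)) * (l:ℂ), ?_⟩
    intro u v hu
    rcases lt_or_ge u v with huv | huv
    · have hv : 0 < v := hu.trans huv
      have hIval : (∫ r in Set.Ioc u v, r ^ (l-1) ∂(volume : Measure ℝ)) = (v ^ l - u ^ l)/l := by
        rw [← intervalIntegral.integral_of_le huv.le]
        rw [integral_rpow (Or.inr ⟨by intro hc; apply hl; linarith, by
          rw [Set.uIcc_of_le huv.le]; intro hc; exact absurd hc.1 (not_le.2 hu)⟩)]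
        rw [sub_add_cancel]
      have hEu : E (Real.log u) = ((u ^ l : ℝ) : ℂ) := by
        have hr : Real.exp (l * Real.log u) = u ^ l := by
          rw [Real.rpow_def_of_pos hu, mul_comm]
        simp only [hE, hr]
      have hEv : E (Real.log v) = ((v ^ l : ℝ) : ℂ) := by
        have hr : Real.exp (l * Real.log v) = v ^ l := by
          rw [Real.rpow_def_of_pos hv, mul_comm]
        simp only [hE, hr]
      rw [hrepr u v hu huv, hpsieq (Real.log v), hpsieq (Real.log u), hEu, hEv, hIval]
      have hlC : (l:ℂ) ≠ 0 := by exact_mod_cast hl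
      push_cast
      field_simp
      ring
    · obtain ⟨h1, h2⟩ := hempty u v huv
      rw [h1, h2]
      simp

/-- Theorem 3.23: if `μ ∈ 𝔐_∞(ρ)` is regular in the sense of
Azarin, with `Fr[μ] = {ν}`, then there is `c ∈ ℂ` such that
`dν(r) = c · r^{ρ∞-1} dr`. -/
theorem statement10 (ρ : ℝ → ℝ) (l : ℝ) (h : IsProximateOrder ρ l)
    (μ : RadonC) (hμ : MemMInfty ρ μ)
    (ν : RadonC) (hν : ν ∈ AzarinSet ρ μ)
    (hreg : ∀ σ ∈ AzarinSet ρ μ, WideEq σ ν) :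
    ∃ c : ℂ, ∀ E : Set ℝ, MeasurableSet E →
      (∃ a b : ℝ, 0 < a ∧ E ⊆ Set.Icc a b) →
      ν.set E = ∫ r in E, c * ((r ^ (l - 1) : ℝ) : ℂ) := by
  obtain ⟨c, hc⟩ := exists_c ρ l h μ ν hν hreg
  refine ⟨c, ?_⟩
  rintro E hE ⟨a, b, ha, hEab⟩
  rcases lt_or_ge b a with hab | hab
  · -- E is empty
    have hEempty : E = ∅ := by
      rw [Set.eq_empty_iff_forall_notMem]
      intro x hx
      have hx' := hEab hx
      rw [Set.mem_Icc] at hx'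
      linarith [hx'.1, hx'.2]
    rw [hEempty, RadonC.set, Measure.restrict_empty, integral_zero_measure,
      Measure.restrict_empty, integral_zero_measure]
  -- main case
  set W : Set ℝ := Set.Ioc (a/2) b with hWdef
  have hW : MeasurableSet W := measurableSet_Ioc
  have ha2 : 0 < a/2 := by linarith
  have hEW : E ⊆ W := by
    intro x hx
    have hx' := hEab hx
    rw [Set.mem_Icc] at hx'
    exact ⟨by linarith [hx'.1], hx'.2⟩
  have hWIcc : W ⊆ Set.Icc (a/2) b := Set.Ioc_subset_Icc_self
  -- value of withDensity measures
  have hval : ∀ (g : ℝ → ℝ), Measurable g → (∀ᵐ x ∂ν.var, |g x| ≤ 1) →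
      ∀ S : Set ℝ, MeasurableSet S →
      ((ν.var.restrict W).withDensity (fun x => ENNReal.ofReal (g x))) S
        = ENNReal.ofReal (∫ x in S ∩ W, max (g x) 0 ∂ν.var) := by
    intro g hg hb S hS
    rw [withDensity_apply _ hS, Measure.restrict_restrict hS]
    have h1 : ∫⁻ x in S ∩ W, ENNReal.ofReal (g x) ∂ν.var
        = ∫⁻ x in S ∩ W, ENNReal.ofReal (max (g x) 0) ∂ν.var := by
      refine lintegral_congr fun x => ?_
      rcases le_total (g x) 0 with h0 | h0
      · rw [max_eq_right h0, ENNReal.ofReal_of_nonpos h0, ENNReal.ofReal_zero]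
      · rw [max_eq_left h0]
    rw [h1, ← ofReal_integral_eq_lintegral_ofReal]
    · refine ν.intOn (hg.max measurable_const) (hb.mono fun x hx => ?_) ha2
        (Set.inter_subset_right.trans hWIcc)
      rw [abs_of_nonneg (le_max_right _ _)]
      exact max_le ((le_abs_self _).trans hx) zero_le_one
    · exact Filter.Eventually.of_forall fun x => le_max_right _ _
  have hrcont : ContinuousOn (fun r : ℝ => r ^ (l-1)) (Set.Icc (a/2) b) := by
    intro x hx
    exact (Real.continuousAt_rpow_const x (l-1)
      (Or.inl (ne_of_gt (lt_of_lt_of_le ha2 hx.1)))).continuousWithinAt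
  have hrint : ∀ S : Set ℝ, IntegrableOn (fun r : ℝ => r ^ (l-1)) (S ∩ W) volume :=
    fun S => (hrcont.integrableOn_compact isCompact_Icc).mono_set
      (Set.inter_subset_right.trans hWIcc)
  have hvalQ : ∀ S : Set ℝ, MeasurableSet S →
      ((volume.restrict W).withDensity (fun r => ENNReal.ofReal (r ^ (l-1)))) S
        = ENNReal.ofReal (∫ r in S ∩ W, r ^ (l-1) ∂(volume : Measure ℝ)) := by
    intro S hS
    have hnn : 0 ≤ᵐ[volume.restrict (S ∩ W)] fun r : ℝ => r ^ (l-1) :=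
      (ae_restrict_iff' (hS.inter hW)).2 (Filter.Eventually.of_forall fun x hx =>
        Real.rpow_nonneg (le_of_lt (lt_of_lt_of_le ha2 (hWIcc hx.2).1)) _)
    rw [withDensity_apply _ hS, Measure.restrict_restrict hS,
      ← ofReal_integral_eq_lintegral_ofReal (hrint S) hnn]
  -- key interval identities for real and imaginary parts
  have hdint : ∀ {p q : ℝ}, 0 < p → IntegrableOn ν.dir (Set.Ioc p q) ν.var :=
    fun hp => ν.intOnDir hp Set.Ioc_subset_Icc_self
  have hkey : ∀ p q : ℝ, a/2 ≤ p →
      (∫ x in Set.Ioc p q, (ν.dir x).re ∂ν.var)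
          = c.re * (∫ r in Set.Ioc p q, r ^ (l-1) ∂(volume : Measure ℝ))
        ∧ (∫ x in Set.Ioc p q, (ν.dir x).im ∂ν.var)
          = c.im * (∫ r in Set.Ioc p q, r ^ (l-1) ∂(volume : Measure ℝ)) := by
    intro p q hp
    have h0 : 0 < p := lt_of_lt_of_le ha2 hp
    have hset := hc p q h0
    rw [RadonC.set] at hset
    constructor
    · have hre := integral_re (μ := ν.var.restrict (Set.Ioc p q)) (f := ν.dir) (hdint h0)
      simp only [RCLike.re_to_complex] at hre
      rw [hre, hset]
      simp [Complex.mul_re]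
    · have him := integral_im (μ := ν.var.restrict (Set.Ioc p q)) (f := ν.dir) (hdint h0)
      simp only [RCLike.im_to_complex] at him
      rw [him, hset]
      simp [Complex.mul_im]
  -- the four densities
  have hmre : Measurable fun x => (ν.dir x).re := Complex.measurable_re.comp ν.measurable_dir
  have hmim : Measurable fun x => (ν.dir x).im := Complex.measurable_im.comp ν.measurable_dir
  have hbre : ∀ᵐ x ∂ν.var, |(ν.dir x).re| ≤ 1 :=
    ν.unimodular.mono fun x hx => le_trans (Complex.abs_re_le_norm _) (le_of_eq hx)
  have hbim : ∀ᵐ x ∂ν.var, |(ν.dir x).im| ≤ 1 :=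
    ν.unimodular.mono fun x hx => le_trans (Complex.abs_im_le_norm _) (le_of_eq hx)
  have hbnre : ∀ᵐ x ∂ν.var, |-(ν.dir x).re| ≤ 1 := hbre.mono fun x hx => by rwa [abs_neg]
  have hbnim : ∀ᵐ x ∂ν.var, |-(ν.dir x).im| ≤ 1 := hbim.mono fun x hx => by rwa [abs_neg]
  -- the auxiliary integrability facts on S ∩ W for the subtraction identities
  have hintOnPart : ∀ (g : ℝ → ℝ), Measurable g → (∀ᵐ x ∂ν.var, |g x| ≤ 1) →
      ∀ (A : Set ℝ), A ⊆ Set.Icc (a/2) b → IntegrableOn (fun x => max (g x) 0) A ν.var := by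
    intro g hg hb A hA
    refine ν.intOn (hg.max measurable_const) (hb.mono fun x hx => ?_) ha2 hA
    rw [abs_of_nonneg (le_max_right _ _)]
    exact max_le ((le_abs_self _).trans hx) zero_le_one
  set Q : Measure ℝ := (volume.restrict W).withDensity (fun r => ENNReal.ofReal (r ^ (l-1)))
    with hQdef
  have hmain : ∀ (g : ℝ → ℝ), Measurable g → (∀ᵐ x ∂ν.var, |g x| ≤ 1) → ∀ k : ℝ,
      (∀ p q : ℝ, a/2 ≤ p → (∫ x in Set.Ioc p q, g x ∂ν.var)
        = k * (∫ r in Set.Ioc p q, r ^ (l-1) ∂(volume : Measure ℝ))) →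
      (∫ x in E, g x ∂ν.var) = k * (∫ r in E, r ^ (l-1) ∂(volume : Measure ℝ)) := by
    intro g hg hb k hkk
    have hbneg : ∀ᵐ x ∂ν.var, |-(g x)| ≤ 1 := hb.mono fun x hx => by rwa [abs_neg]
    set P1 : Measure ℝ := (ν.var.restrict W).withDensity (fun x => ENNReal.ofReal (g x))
      with hP1def
    set P2 : Measure ℝ := (ν.var.restrict W).withDensity (fun x => ENNReal.ofReal (-(g x)))
      with hP2def
    have hside : ∀ S : Set ℝ, MeasurableSet S → (∃ p q, a/2 ≤ p ∧ S ∩ W = Set.Ioc p q) →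
        (P1 + ENNReal.ofReal (max (-k) 0) • Q) S = (P2 + ENNReal.ofReal (max k 0) • Q) S := by
      rintro S hS ⟨p, q, hp, hSW⟩
      rw [Measure.add_apply, Measure.add_apply, Measure.smul_apply, Measure.smul_apply,
        smul_eq_mul, smul_eq_mul, hP1def, hP2def, hQdef,
        hval g hg hb S hS, hval (fun x => -(g x)) hg.neg hbneg S hS, hvalQ S hS, hSW]
      have hIoc : Set.Ioc p q ⊆ Set.Icc (a/2) b :=
        (hSW ▸ (Set.inter_subset_right : S ∩ W ⊆ W)).trans hWIcc
      set A := ∫ x in Set.Ioc p q, max (g x) 0 ∂ν.var with hA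
      set B := ∫ x in Set.Ioc p q, max (-(g x)) 0 ∂ν.var with hB
      set I := ∫ r in Set.Ioc p q, r ^ (l-1) ∂(volume : Measure ℝ) with hI
      have hAnn : 0 ≤ A := integral_nonneg fun x => le_max_right _ _
      have hBnn : 0 ≤ B := integral_nonneg fun x => le_max_right _ _
      have hInn : 0 ≤ I := setIntegral_nonneg measurableSet_Ioc fun x hx =>
        Real.rpow_nonneg (le_of_lt (lt_of_lt_of_le ha2 (hIoc hx).1)) _
      have hsub : A - B = k * I := by
        have h2 : A - B = ∫ x in Set.Ioc p q, g x ∂ν.var := by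
          rw [hA, hB, ← integral_sub (hintOnPart g hg hb _ hIoc)
            (hintOnPart (fun x => -(g x)) hg.neg hbneg _ hIoc)]
          exact integral_congr_ae (Filter.Eventually.of_forall fun x =>
            max_zero_sub_max_neg_zero_eq_self _)
        rw [h2, hkk p q hp]
      rw [← ENNReal.ofReal_mul (le_max_right _ _), ← ENNReal.ofReal_mul (le_max_right _ _),
        ← ENNReal.ofReal_add hAnn (mul_nonneg (le_max_right _ _) hInn),
        ← ENNReal.ofReal_add hBnn (mul_nonneg (le_max_right _ _) hInn)]
      congr 1
      have hk : max k 0 - max (-k) 0 = k := max_zero_sub_max_neg_zero_eq_self k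
      linear_combination hsub - I * hk
    haveI hf1 : IsFiniteMeasure (P1 + ENNReal.ofReal (max (-k) 0) • Q) := by
      constructor
      rw [Measure.add_apply, Measure.smul_apply, smul_eq_mul, hP1def, hQdef,
        hval g hg hb _ MeasurableSet.univ, hvalQ _ MeasurableSet.univ]
      exact ENNReal.add_lt_top.2 ⟨ENNReal.ofReal_lt_top,
        ENNReal.mul_lt_top ENNReal.ofReal_lt_top ENNReal.ofReal_lt_top⟩
    have hMeq : P1 + ENNReal.ofReal (max (-k) 0) • Q = P2 + ENNReal.ofReal (max k 0) • Q := by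
      refine MeasureTheory.ext_of_generate_finite _
        (BorelSpace.measurable_eq.trans (borel_eq_generateFrom_Ioc ℝ))
        (isPiSystem_Ioc (id : ℝ → ℝ) id) ?_ ?_
      · rintro S ⟨p, q, hpq, rfl⟩
        refine hside _ measurableSet_Ioc ⟨p ⊔ a/2, q ⊓ b, le_sup_right, ?_⟩
        rw [hWdef, Set.Ioc_inter_Ioc]
      · refine hside _ MeasurableSet.univ ⟨a/2, b, le_rfl, ?_⟩
        rw [Set.univ_inter]
    have hEeval : (P1 + ENNReal.ofReal (max (-k) 0) • Q) E
        = (P2 + ENNReal.ofReal (max k 0) • Q) E := by rw [hMeq]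
    rw [Measure.add_apply, Measure.add_apply, Measure.smul_apply, Measure.smul_apply,
      smul_eq_mul, smul_eq_mul, hP1def, hP2def, hQdef,
      hval g hg hb E hE, hval (fun x => -(g x)) hg.neg hbneg E hE, hvalQ E hE,
      Set.inter_eq_left.2 hEW] at hEeval
    have hEIcc : E ⊆ Set.Icc (a/2) b := hEW.trans hWIcc
    set A := ∫ x in E, max (g x) 0 ∂ν.var with hA
    set B := ∫ x in E, max (-(g x)) 0 ∂ν.var with hB
    set I := ∫ r in E, r ^ (l-1) ∂(volume : Measure ℝ) with hI
    have hAnn : 0 ≤ A := integral_nonneg fun x => le_max_right _ _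
    have hBnn : 0 ≤ B := integral_nonneg fun x => le_max_right _ _
    have hInn : 0 ≤ I := setIntegral_nonneg hE fun x hx =>
      Real.rpow_nonneg (le_of_lt (lt_of_lt_of_le ha2 (hEIcc hx).1)) _
    rw [← ENNReal.ofReal_mul (le_max_right _ _), ← ENNReal.ofReal_mul (le_max_right _ _),
      ← ENNReal.ofReal_add hAnn (mul_nonneg (le_max_right _ _) hInn),
      ← ENNReal.ofReal_add hBnn (mul_nonneg (le_max_right _ _) hInn),
      ENNReal.ofReal_eq_ofReal_iff (by positivity) (by positivity)] at hEeval
    have h2 : A - B = ∫ x in E, g x ∂ν.var := by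
      rw [hA, hB, ← integral_sub (hintOnPart g hg hb _ hEIcc)
        (hintOnPart (fun x => -(g x)) hg.neg hbneg _ hEIcc)]
      exact integral_congr_ae (Filter.Eventually.of_forall fun x =>
        max_zero_sub_max_neg_zero_eq_self _)
    have hk : max k 0 - max (-k) 0 = k := max_zero_sub_max_neg_zero_eq_self k
    rw [← h2]
    linear_combination hEeval + I * hk
  have hre := hmain (fun x => (ν.dir x).re) hmre hbre c.re (fun p q hp => (hkey p q hp).1)
  have him := hmain (fun x => (ν.dir x).im) hmim hbim c.im (fun p q hp => (hkey p q hp).2)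
  have hdirE : IntegrableOn ν.dir E ν.var := ν.intOnDir ha hEab
  have hRHS : (∫ r in E, c * ((r ^ (l - 1) : ℝ) : ℂ))
      = c * ((∫ r in E, r ^ (l-1) ∂(volume : Measure ℝ) : ℝ) : ℂ) := by
    have h0 : (fun r : ℝ => c * ((r ^ (l - 1) : ℝ) : ℂ))
        = fun r : ℝ => (r ^ (l-1) : ℝ) • c := by
      funext r; rw [Complex.real_smul]; ring
    rw [h0, integral_smul_const, Complex.real_smul, mul_comm]
  rw [hRHS]
  apply Complex.ext
  · have h1 := integral_re (μ := ν.var.restrict E) (f := ν.dir) hdirE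
    simp only [RCLike.re_to_complex] at h1
    rw [RadonC.set, ← h1, hre]
    simp [Complex.mul_re]
  · have h1 := integral_im (μ := ν.var.restrict E) (f := ν.dir) hdirE
    simp only [RCLike.im_to_complex] at h1
    rw [RadonC.set, ← h1, him]
    simp [Complex.mul_im]

end
end
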